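/- arXiv:2604.26234 — 9 statements merged into one kernel-verified Lean document; each statement's English description precedes it below -/
import Mathlib

section
/- Suppose m = n and let A = (d_{ij})_{1≤i,j≤n} be the integer matrix whose i-th row is d_i. If gcd(det A, q−1) = 1, then there exist infinitely many integers ℓ ≥ 1 such that L(D, q^ℓ, b_ℓ) is nonempty; in fact one may take every ℓ ≡ 1 (mod r) for a suitable integer r ≥ 1. -/
open Finset

/-- `Lset q ℓ d b` is the set `L(D, q^ℓ, b_ℓ)` of tuples
`u ∈ {0,…,q^ℓ-1}^n` with `∑ uᵢ dᵢ + b_ℓ ≡ 0 (mod q^ℓ - 1)` componentwise,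
where `b_ℓ = ((q^ℓ-1)/(q-1))·b`. -/
def Lset (q ℓ : ℕ) {m n : ℕ} (d : Fin n → Fin m → ℤ) (b : Fin m → ℤ) : Set (Fin n → ℕ) :=
  {u | (∀ i, u i ≤ q ^ ℓ - 1) ∧
    ∀ j, ((q : ℤ) ^ ℓ - 1) ∣
      (∑ i, (u i : ℤ) * d i j + ((q : ℤ) ^ ℓ - 1) / ((q : ℤ) - 1) * b j)}

lemma lemB {n : ℕ} (q ℓ : ℕ) (hq : 2 ≤ q) (hℓ : 1 ≤ ℓ)
    (d : Fin n → Fin n → ℤ) (b : Fin n → ℤ)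
    (hcop : Int.gcd (Matrix.det (Matrix.of d)) ((q:ℤ)^ℓ - 1) = 1) :
    (Lset q ℓ d b).Nonempty := by
  have hq2 : 2 ≤ q ^ ℓ := le_trans hq (Nat.le_self_pow (by omega) q)
  set N : ℕ := q ^ ℓ - 1 with hNdef
  have hN1 : 1 ≤ N := by omega
  haveI : NeZero N := ⟨by omega⟩
  have hcast : ((N : ℤ)) = (q:ℤ)^ℓ - 1 := by
    push_cast [hNdef, Nat.cast_sub (by omega : 1 ≤ q ^ ℓ)]; ring
  set M : Matrix (Fin n) (Fin n) (ZMod N) := (Matrix.of d).map (Int.cast : ℤ → ZMod N) with hM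
  have hdet : IsUnit M.det := by
    have hMd : M.det = (((Matrix.of d).det : ℤ) : ZMod N) := by
      rw [hM]
      exact (RingHom.map_det (Int.castRingHom (ZMod N)) (Matrix.of d)).symm
    rw [hMd]
    have hco : IsCoprime (Matrix.det (Matrix.of d)) ((N : ℕ) : ℤ) := by
      rw [Int.isCoprime_iff_gcd_eq_one, hcast]; exact hcop
    obtain ⟨a, c, h⟩ := hco
    have := congrArg (fun x : ℤ => (x : ZMod N)) h
    push_cast at this
    rw [ZMod.natCast_self] at this
    simp only [mul_zero, add_zero] at this
    exact IsUnit.of_mul_eq_one _ (by rw [mul_comm, ← hMd]; exact this)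
  set c : Fin n → ZMod N := fun j => (((N:ℤ) / ((q:ℤ) - 1) * b j : ℤ) : ZMod N) with hc
  set v : Fin n → ZMod N := Matrix.vecMul (-c) M⁻¹ with hv
  have hvM : Matrix.vecMul v M = -c := by
    rw [hv, Matrix.vecMul_vecMul, Matrix.nonsing_inv_mul M hdet, Matrix.vecMul_one]
  refine ⟨fun i => (v i).val, fun i => ?_, fun j => ?_⟩
  · exact le_of_lt (ZMod.val_lt (v i))
  · rw [← hcast, ← ZMod.intCast_zmod_eq_zero_iff_dvd]
    push_cast
    have h1 : ∀ i, (((v i).val : ℕ) : ZMod N) = v i := fun i => by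
      rw [ZMod.natCast_val, ZMod.cast_id]
    simp only [h1]
    have hj := congrFun hvM j
    simp only [Matrix.vecMul, dotProduct, hM, Matrix.map_apply, Matrix.of_apply,
      Pi.neg_apply] at hj
    have hcj : c j = (((N:ℤ) / ((q:ℤ) - 1) : ℤ) : ZMod N) * ((b j : ℤ) : ZMod N) := by
      rw [hc]; push_cast; ring
    rw [hj, ← hcj]
    ring

lemma lemA (p f q : ℕ) (hp : p.Prime) (hf : 1 ≤ f) (hq : q = p ^ f) (D : ℤ) (hD : D ≠ 0)
    (hA : Int.gcd D ((q:ℤ) - 1) = 1) :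
    ∃ r : ℕ, 1 ≤ r ∧ ∀ ℓ : ℕ, 1 ≤ ℓ → ℓ % r = 1 % r →
      Int.gcd D ((q:ℤ)^ℓ - 1) = 1 := by
  have hq2 : 2 ≤ q := by
    rw [hq]; calc 2 ≤ p := hp.two_le
    _ ≤ p ^ f := Nat.le_self_pow (by omega) p
  set a : ℕ := D.natAbs with ha
  have ha0 : a ≠ 0 := Int.natAbs_ne_zero.mpr hD
  have hAq : Nat.Coprime a (q - 1) := by
    have : ((q:ℤ) - 1).natAbs = q - 1 := by omega
    rw [Nat.Coprime, ← this, ← Int.gcd]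
    exact hA
  set a1 : ℕ := a / p ^ (a.factorization p) with ha1
  have ha1pos : 0 < a1 := Nat.ordCompl_pos p ha0
  have ha1dvd : a1 ∣ a := Nat.ordCompl_dvd a p
  have hco : Nat.Coprime q a1 := by
    rw [hq]
    exact (Nat.coprime_ordCompl hp ha0).pow_left f
  haveI : NeZero a1 := ⟨by omega⟩
  set U : (ZMod a1)ˣ := ZMod.unitOfCoprime q hco with hU
  refine ⟨orderOf U, orderOf_pos U, fun ℓ hℓ hmod => ?_⟩
  have hUl : U ^ ℓ = U ^ 1 := by
    rw [pow_eq_pow_iff_modEq]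
    exact hmod
  have hql : ((q : ZMod a1)) ^ ℓ = (q : ZMod a1) := by
    have := congrArg (Units.val) hUl
    simpa [hU, ZMod.coe_unitOfCoprime] using this
  have hq1 : 1 ≤ q ^ ℓ := Nat.one_le_pow _ _ (by omega)
  have hnAbs : ((q:ℤ)^ℓ - 1).natAbs = q ^ ℓ - 1 := by
    have : ((q:ℤ))^ℓ = ((q ^ ℓ : ℕ) : ℤ) := by push_cast; ring
    omega
  have goal : Nat.Coprime a (q ^ ℓ - 1) := by
    have hsplit : a = p ^ (a.factorization p) * a1 := (Nat.ordProj_mul_ordCompl_eq_self a p).symm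
    rw [hsplit]
    apply Nat.Coprime.mul
    · apply Nat.Coprime.pow_left
      rw [hp.coprime_iff_not_dvd]
      intro hdvd
      have hpq : p ∣ q ^ ℓ := by
        rw [hq, ← pow_mul]
        exact dvd_pow_self p (by positivity)
      have : p ∣ 1 := by
        have := Nat.dvd_sub hpq hdvd
        rwa [Nat.sub_sub_self hq1] at this
      exact hp.one_lt.ne' (Nat.dvd_one.mp this)
    · rw [Nat.coprime_comm, ← ZMod.isUnit_iff_coprime]
      have hcast1 : ((q ^ ℓ - 1 : ℕ) : ZMod a1) = ((q - 1 : ℕ) : ZMod a1) := by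
        have e1 : ((q ^ ℓ - 1 : ℕ) : ZMod a1) = (q : ZMod a1) ^ ℓ - 1 := by
          push_cast [Nat.cast_sub hq1]; ring
        have e2 : ((q - 1 : ℕ) : ZMod a1) = (q : ZMod a1) - 1 := by
          rw [Nat.cast_sub (by omega : 1 ≤ q)]; push_cast; ring
        rw [e1, e2, hql]
      rw [hcast1, ZMod.isUnit_iff_coprime]
      exact Nat.Coprime.coprime_dvd_right ha1dvd (Nat.coprime_comm.mp hAq)
  have : Int.gcd D ((q:ℤ)^ℓ - 1) = Nat.gcd a (q ^ ℓ - 1) := by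
    rw [Int.gcd, ← ha, hnAbs]
  rw [this]
  exact goal

/-- If `m = n` and `gcd(det A, q-1) = 1` where `A` is the matrix whose `i`-th row is `dᵢ`,
then there are infinitely many `ℓ ≥ 1` with `L(D, q^ℓ, b_ℓ)` nonempty; in fact there is an
`r ≥ 1` such that every `ℓ ≡ 1 (mod r)` works. -/
theorem stmt0 (p f n : ℕ) (hp : p.Prime) (hf : 1 ≤ f) (hn : 1 ≤ n) (q : ℕ) (hq : q = p ^ f)
    (d : Fin n → Fin n → ℤ) (b : Fin n → ℤ) (hb : ∀ j, 0 ≤ b j ∧ b j ≤ (q : ℤ) - 2)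
    (hA : Int.gcd (Matrix.det (Matrix.of d)) ((q : ℤ) - 1) = 1) :
    {ℓ : ℕ | 1 ≤ ℓ ∧ (Lset q ℓ d b).Nonempty}.Infinite ∧
    ∃ r : ℕ, 1 ≤ r ∧ ∀ ℓ : ℕ, 1 ≤ ℓ → ℓ % r = 1 % r → (Lset q ℓ d b).Nonempty := by
  have hq2 : 2 ≤ q := by
    rw [hq]; calc 2 ≤ p := hp.two_le
    _ ≤ p ^ f := Nat.le_self_pow (by omega) p
  -- obtain r such that every ℓ ≡ 1 (mod r), ℓ ≥ 1 gives a nonempty Lset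
  have key : ∃ r : ℕ, 1 ≤ r ∧ ∀ ℓ : ℕ, 1 ≤ ℓ → ℓ % r = 1 % r → (Lset q ℓ d b).Nonempty := by
    by_cases hD : Matrix.det (Matrix.of d) = 0
    · -- degenerate case: then q - 1 = 1, so q = 2 and b = 0; take u = 0
      have hq1 : q = 2 := by
        rw [hD] at hA
        simp [Int.gcd] at hA
        omega
      have hb0 : ∀ j, b j = 0 := by
        intro j
        have := hb j
        rw [hq1] at this
        norm_num at this
        omega
      refine ⟨1, le_refl 1, fun ℓ hℓ _ => ⟨fun _ => 0, fun i => Nat.zero_le _, fun j => ?_⟩⟩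
      simp [hb0 j]
    · obtain ⟨r, hr1, hr⟩ := lemA p f q hp hf hq _ hD hA
      exact ⟨r, hr1, fun ℓ hℓ hmod => lemB q ℓ hq2 hℓ d b (hr ℓ hℓ hmod)⟩
  obtain ⟨r, hr1, hr⟩ := key
  constructor
  · apply Set.infinite_of_injective_forall_mem (f := fun k : ℕ => 1 + k * r)
    · intro x y hxy
      simp only at hxy
      have : x * r = y * r := by omega
      exact Nat.eq_of_mul_eq_mul_right (by omega) this
    · intro k
      refine ⟨by omega, hr _ (by omega) ?_⟩
      simp [Nat.add_mul_mod_self_right]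
  · exact ⟨r, hr1, hr⟩
end

section
/- For every integer ℓ ≥ 1, the set L(D, q^ℓ, b_ℓ) is nonempty if and only if for every prime r and integer e ≥ 1 with r^e exactly dividing q−1, writing r^g for the exact power of r dividing (q^ℓ−1)/(q−1), there exists v ∈ ℤ^n such that Σ_{i=1}^n v_i d_i ≡ r^g·b (mod r^{e+g}) componentwise. -/
open Finset

/-- Solvability of `∑ vᵢ dᵢ ≡ w (mod N)`. -/
def Solv {m n : ℕ} (d : Fin n → Fin m → ℤ) (N : ℕ) (w : Fin m → ℤ) : Prop :=
  ∃ v : Fin n → ℤ, ∀ j, (N : ℤ) ∣ ∑ i, v i * d i j - w j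

lemma sum_congr_dvd {m n : ℕ} (d : Fin n → Fin m → ℤ) {M : ℤ} {v v' : Fin n → ℤ}
    (h : ∀ i, M ∣ v i - v' i) (j : Fin m) :
    M ∣ (∑ i, v i * d i j) - (∑ i, v' i * d i j) := by
  rw [← Finset.sum_sub_distrib]
  refine Finset.dvd_sum fun i _ => ?_
  have : v i * d i j - v' i * d i j = (v i - v' i) * d i j := by ring
  rw [this]
  exact (h i).mul_right _

lemma solv_shift {m n : ℕ} (d : Fin n → Fin m → ℤ) {M : ℤ} {v v' : Fin n → ℤ}
    {w : Fin m → ℤ} (hv : ∀ j, M ∣ ∑ i, v i * d i j - w j)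
    (h : ∀ i, M ∣ v' i - v i) (j : Fin m) :
    M ∣ ∑ i, v' i * d i j - w j := by
  have := dvd_add (hv j) (sum_congr_dvd d h j)
  have e : ∑ i, v' i * d i j - w j
      = ∑ i, v i * d i j - w j + (∑ i, v' i * d i j - ∑ i, v i * d i j) := by ring
  rw [e]
  exact this

lemma solv_of_dvd {m n : ℕ} (d : Fin n → Fin m → ℤ) {N M : ℕ} (h : N ∣ M)
    {w : Fin m → ℤ} (hs : Solv d M w) : Solv d N w := by
  obtain ⟨v, hv⟩ := hs
  exact ⟨v, fun j => dvd_trans (Int.natCast_dvd_natCast.mpr h) (hv j)⟩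

lemma solv_mul {m n : ℕ} (d : Fin n → Fin m → ℤ) {a c : ℕ} (hac : Nat.Coprime a c)
    {w : Fin m → ℤ} (ha : Solv d a w) (hc : Solv d c w) : Solv d (a * c) w := by
  obtain ⟨v₁, hv₁⟩ := ha
  obtain ⟨v₂, hv₂⟩ := hc
  have hco : IsCoprime (a : ℤ) (c : ℤ) := Nat.isCoprime_iff_coprime.mpr hac
  obtain ⟨x, y, hxy⟩ := hco
  have hco' : IsCoprime (a : ℤ) (c : ℤ) := ⟨x, y, hxy⟩
  set v : Fin n → ℤ := fun i => v₁ i * (y * c) + v₂ i * (x * a) with hv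
  have hdA : ∀ i, (a : ℤ) ∣ v i - v₁ i := fun i =>
    ⟨x * (v₂ i - v₁ i), by simp only [hv]; linear_combination v₁ i * hxy⟩
  have hdC : ∀ i, (c : ℤ) ∣ v i - v₂ i := fun i =>
    ⟨y * (v₁ i - v₂ i), by simp only [hv]; linear_combination v₂ i * hxy⟩
  refine ⟨v, fun j => ?_⟩
  push_cast
  exact hco'.mul_dvd (solv_shift d hv₁ hdA j) (solv_shift d hv₂ hdC j)

lemma solv_one {m n : ℕ} (d : Fin n → Fin m → ℤ) (w : Fin m → ℤ) : Solv d 1 w :=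
  ⟨0, fun j => by simp⟩

lemma solv_of_forall_primes {m n : ℕ} (d : Fin n → Fin m → ℤ) (w : Fin m → ℤ) :
    ∀ N : ℕ, 0 < N → (∀ r : ℕ, r.Prime → Solv d (r ^ N.factorization r) w) →
      Solv d N w := by
  intro N
  induction N using Nat.strong_induction_on with
  | _ N ih =>
    intro hN hall
    rcases eq_or_ne N 1 with rfl | hN1
    · exact solv_one d w
    · set r := N.minFac with hr
      have hrp : r.Prime := Nat.minFac_prime hN1
      have hk : 0 < N.factorization r :=
        hrp.factorization_pos_of_dvd hN.ne' (Nat.minFac_dvd N)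
      set M := N / r ^ N.factorization r with hM
      have hMN : r ^ N.factorization r * M = N := Nat.ordProj_mul_ordCompl_eq_self N r
      have hMpos : 0 < M := Nat.ordCompl_pos r hN.ne'
      have hMlt : M < N :=
        Nat.div_lt_self hN (Nat.one_lt_pow hk.ne' hrp.one_lt)
      have hMsolv : Solv d M w := by
        refine ih M hMlt hMpos fun s hs => ?_
        rcases eq_or_ne s r with rfl | hsr
        · rw [hM, Nat.factorization_ordCompl, Finsupp.erase_same, pow_zero]
          exact solv_one d w
        · rw [hM, Nat.factorization_ordCompl, Finsupp.erase_ne hsr]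
          exact hall s hs
      have hcop : Nat.Coprime (r ^ N.factorization r) M :=
        (Nat.coprime_ordCompl hrp hN.ne').pow_left _
      rw [← hMN]
      exact solv_mul d hcop (hall r hrp) hMsolv

lemma solv_unit_mul {m n : ℕ} (d : Fin n → Fin m → ℤ) (M : ℕ) (s : ℤ) (w : Fin m → ℤ)
    (hs : IsCoprime s (M : ℤ)) :
    (∃ v : Fin n → ℤ, ∀ j, (M : ℤ) ∣ ∑ i, v i * d i j - s * w j) ↔
    (∃ v : Fin n → ℤ, ∀ j, (M : ℤ) ∣ ∑ i, v i * d i j - w j) := by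
  obtain ⟨t, u, htu⟩ := hs
  constructor
  · rintro ⟨v, hv⟩
    refine ⟨fun i => t * v i, fun j => ?_⟩
    have hS : ∑ i, (t * v i) * d i j = t * ∑ i, v i * d i j := by
      rw [Finset.mul_sum]
      exact Finset.sum_congr rfl fun i _ => by ring
    have key : ∑ i, (t * v i) * d i j - w j
        = t * (∑ i, v i * d i j - s * w j) + (M : ℤ) * (-(u * w j)) := by
      rw [hS]; linear_combination (w j) * htu
    rw [key]
    exact dvd_add ((hv j).mul_left t) (dvd_mul_right _ _)
  · rintro ⟨v, hv⟩
    refine ⟨fun i => s * v i, fun j => ?_⟩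
    have key : ∑ i, (s * v i) * d i j - s * w j = s * (∑ i, v i * d i j - w j) := by
      rw [mul_sub, Finset.mul_sum]
      congr 1
      exact Finset.sum_congr rfl fun i _ => by ring
    rw [key]
    exact (hv j).mul_left s

/-- `L(D, q^ℓ, b_ℓ)` is nonempty iff for every prime power `r^e` exactly dividing `q-1`
(with `e ≥ 1`), writing `r^g` for the exact power of `r` dividing `(q^ℓ-1)/(q-1)`,
there is `v ∈ ℤ^n` with `∑ vᵢ dᵢ ≡ r^g·b (mod r^{e+g})` componentwise. -/
theorem stmt2 (p f m n : ℕ) (hp : p.Prime) (hf : 1 ≤ f) (hm : 1 ≤ m) (hn : 1 ≤ n)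
    (q : ℕ) (hq : q = p ^ f)
    (d : Fin n → Fin m → ℤ) (b : Fin m → ℤ) (hb : ∀ j, 0 ≤ b j ∧ b j ≤ (q : ℤ) - 2)
    (ℓ : ℕ) (hℓ : 1 ≤ ℓ) :
    (Lset q ℓ d b).Nonempty ↔
      ∀ r e g : ℕ, r.Prime → 1 ≤ e →
        r ^ e ∣ q - 1 → ¬ r ^ (e + 1) ∣ q - 1 →
        r ^ g ∣ (q ^ ℓ - 1) / (q - 1) → ¬ r ^ (g + 1) ∣ (q ^ ℓ - 1) / (q - 1) →
        ∃ v : Fin n → ℤ, ∀ j,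
          ((r : ℤ) ^ (e + g)) ∣ (∑ i, v i * d i j - (r : ℤ) ^ g * b j) := by
  -- basic numerology
  have hq2 : 2 ≤ q := by
    subst hq
    calc 2 ≤ p := hp.two_le
    _ ≤ p ^ f := Nat.le_self_pow (by omega) p
  have hqpow : 2 ≤ q ^ ℓ := le_trans hq2 (Nat.le_self_pow (by omega) q)
  set Qn : ℕ := q ^ ℓ - 1 with hQn
  have hQpos : 0 < Qn := by omega
  have hdvd : (q - 1) ∣ Qn := by simpa using Nat.sub_dvd_pow_sub_pow q 1 ℓ
  set cn : ℕ := Qn / (q - 1) with hcn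
  have hmul : (q - 1) * cn = Qn := Nat.mul_div_cancel' hdvd
  have hq1pos : 0 < q - 1 := by omega
  have hcpos : 0 < cn :=
    Nat.div_pos (Nat.le_of_dvd hQpos hdvd) hq1pos
  have hcastQ : ((Qn : ℤ)) = (q : ℤ) ^ ℓ - 1 := by
    rw [hQn]
    push_cast [Nat.one_le_iff_ne_zero.mpr (by positivity : q ^ ℓ ≠ 0)]
    ring
  have hcastq1 : (((q - 1 : ℕ)) : ℤ) = (q : ℤ) - 1 := by
    push_cast [Nat.one_le_iff_ne_zero.mpr (by omega : q ≠ 0)]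
    ring
  have hdivC : ((q : ℤ) ^ ℓ - 1) / ((q : ℤ) - 1) = (cn : ℤ) := by
    refine Int.ediv_eq_of_eq_mul_left ?_ ?_
    · have h2 : (2 : ℤ) ≤ (q : ℤ) := by exact_mod_cast hq2
      omega
    · rw [← hcastQ, ← hmul, Nat.cast_mul, hcastq1]
      ring
  set W : Fin m → ℤ := fun j => -((cn : ℤ) * b j) with hW
  -- Step A : nonempty iff Solv over Q
  have stepA : (Lset q ℓ d b).Nonempty ↔ Solv d Qn W := by
    constructor
    · rintro ⟨u, hu1, hu2⟩
      refine ⟨fun i => (u i : ℤ), fun j => ?_⟩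
      have h := hu2 j
      rw [hdivC, ← hcastQ] at h
      simpa [hW, sub_neg_eq_add] using h
    · rintro ⟨v, hv⟩
      refine ⟨fun i => (v i % (Qn : ℤ)).toNat, ?_, ?_⟩
      · intro i
        have h0 : (0 : ℤ) < (Qn : ℤ) := by exact_mod_cast hQpos
        have h1 : 0 ≤ v i % (Qn : ℤ) := Int.emod_nonneg _ h0.ne'
        have h2 : v i % (Qn : ℤ) < (Qn : ℤ) := Int.emod_lt_of_pos _ h0
        have h3 : ((v i % (Qn : ℤ)).toNat : ℤ) = v i % (Qn : ℤ) := Int.toNat_of_nonneg h1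
        have h4 : (v i % (Qn : ℤ)).toNat < Qn := by
          have := h3 ▸ h2
          exact_mod_cast this
        exact le_of_lt (lt_of_lt_of_eq h4 hQn)
      · intro j
        rw [hdivC, ← hcastQ]
        have h0 : (0 : ℤ) < (Qn : ℤ) := by exact_mod_cast hQpos
        have hdd : ∀ i, (Qn : ℤ) ∣ (((v i % (Qn : ℤ)).toNat : ℤ)) - v i := by
          intro i
          have h1 : 0 ≤ v i % (Qn : ℤ) := Int.emod_nonneg _ h0.ne'
          rw [Int.toNat_of_nonneg h1, Int.emod_def]
          exact ⟨-(v i / (Qn : ℤ)), by ring⟩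
        have := solv_shift d hv hdd j
        simpa [hW, sub_neg_eq_add] using this
  rw [stepA]
  have hq1ne : q - 1 ≠ 0 := by omega
  have hcnne : cn ≠ 0 := hcpos.ne'
  have hQfact : ∀ r : ℕ, Qn.factorization r
      = (q - 1).factorization r + cn.factorization r := by
    intro r
    rw [← hmul, Nat.factorization_mul hq1ne hcnne]
    simp
  constructor
  · -- forward
    intro hsolv r e g hr he hdq hndq hdc hndc
    have heq : e = (q - 1).factorization r := by
      have h1 := (hr.pow_dvd_iff_le_factorization hq1ne).mp hdq
      have h2 : ¬ (e + 1 ≤ (q - 1).factorization r) := fun h =>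
        hndq ((hr.pow_dvd_iff_le_factorization hq1ne).mpr h)
      omega
    have hgq : g = cn.factorization r := by
      have h1 := (hr.pow_dvd_iff_le_factorization hcnne).mp hdc
      have h2 : ¬ (g + 1 ≤ cn.factorization r) := fun h =>
        hndc ((hr.pow_dvd_iff_le_factorization hcnne).mpr h)
      omega
    have hdvdQ : r ^ (e + g) ∣ Qn := by
      rw [← hmul, pow_add]
      exact mul_dvd_mul hdq hdc
    obtain ⟨v, hv⟩ := solv_of_dvd d hdvdQ hsolv
    -- c' := ordCompl
    set c' : ℕ := cn / r ^ cn.factorization r with hc'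
    have hc'mul : r ^ g * c' = cn := by
      rw [hgq]; exact Nat.ordProj_mul_ordCompl_eq_self cn r
    have hcop : Nat.Coprime r c' := Nat.coprime_ordCompl hr hcnne
    have hiscop : IsCoprime (-(c' : ℤ)) (((r ^ (e + g) : ℕ)) : ℤ) :=
      (Nat.isCoprime_iff_coprime.mpr ((hcop.symm).pow_right (e + g))).neg_left
    have hcast : ((cn : ℤ)) = (r : ℤ) ^ g * (c' : ℤ) := by
      rw [← hc'mul]; push_cast; ring
    have hWform : ∀ j, W j = (-(c' : ℤ)) * ((r : ℤ) ^ g * b j) := by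
      intro j
      show -((cn : ℤ) * b j) = _
      rw [hcast]; ring
    have hv' : ∃ v : Fin n → ℤ, ∀ j,
        (((r ^ (e + g) : ℕ)) : ℤ) ∣ ∑ i, v i * d i j - (-(c' : ℤ)) * ((r : ℤ) ^ g * b j) := by
      refine ⟨v, fun j => ?_⟩
      rw [← hWform j]
      exact hv j
    obtain ⟨v', hvv⟩ := (solv_unit_mul d (r ^ (e + g)) (-(c' : ℤ))
      (fun j => (r : ℤ) ^ g * b j) hiscop).mp hv'
    refine ⟨v', fun j => ?_⟩
    have := hvv j
    push_cast at this
    exact this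
  · -- backward
    intro hRHS
    refine solv_of_forall_primes d W Qn hQpos fun r hr => ?_
    set E := (q - 1).factorization r with hE
    set G := cn.factorization r with hG
    rw [hQfact r, ← hE, ← hG]
    rcases Nat.eq_zero_or_pos E with hE0 | hEpos
    · -- trivial case : v = 0 works since r^G ∣ cn
      refine ⟨0, fun j => ?_⟩
      have hdc : (r : ℤ) ^ G ∣ (cn : ℤ) := by
        have := Nat.ordProj_dvd cn r
        exact_mod_cast this
      have : ((r ^ (E + G) : ℕ) : ℤ) ∣ (cn : ℤ) * b j := by
        rw [hE0]
        push_cast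
        simpa using hdc.mul_right (b j)
      simpa [hW, sub_neg_eq_add] using this
    · obtain ⟨v, hv⟩ := hRHS r E G hr hEpos (Nat.ordProj_dvd _ r)
        (Nat.pow_succ_factorization_not_dvd hq1ne hr) (Nat.ordProj_dvd _ r)
        (Nat.pow_succ_factorization_not_dvd hcnne hr)
      set c' : ℕ := cn / r ^ cn.factorization r with hc'
      have hc'mul : r ^ G * c' = cn := Nat.ordProj_mul_ordCompl_eq_self cn r
      refine ⟨fun i => (-(c' : ℤ)) * v i, fun j => ?_⟩
      have hcast : ((cn : ℤ)) = (r : ℤ) ^ G * (c' : ℤ) := by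
        rw [← hc'mul]; push_cast; ring
      have hS : ∑ i, ((-(c' : ℤ)) * v i) * d i j = (-(c' : ℤ)) * ∑ i, v i * d i j := by
        rw [Finset.mul_sum]
        exact Finset.sum_congr rfl fun i _ => by ring
      have key : ∑ i, ((-(c' : ℤ)) * v i) * d i j - W j
          = (-(c' : ℤ)) * (∑ i, v i * d i j - (r : ℤ) ^ G * b j) := by
        rw [hS]
        show _ - (-((cn : ℤ) * b j)) = _
        rw [hcast]
        ring
      rw [key]
      push_cast
      exact ((hv j).mul_left _)
end

section
/- If Λ(D, b) is nonempty, then there exists an integer ℓ₀ ≥ 1, all of whose prime factors divide q−1, such that Λ(D, b) = { kℓ₀ : k ∈ ℤ, k ≥ 1 }. -/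
open Finset

/-- `Λ(D, b)` is the set of `ℓ ≥ 1` with `L(D, q^ℓ, b_ℓ)` nonempty. -/
def Lambda (q : ℕ) {m n : ℕ} (d : Fin n → Fin m → ℤ) (b : Fin m → ℤ) : Set ℕ :=
  {ℓ | 1 ≤ ℓ ∧ (Lset q ℓ d b).Nonempty}

namespace StmtAux

/-- Solvability of the linear system over `ℤ`. -/
def S {m n : ℕ} (d : Fin n → Fin m → ℤ) (b : Fin m → ℤ) (t N : ℤ) : Prop :=
  ∃ (u : Fin n → ℤ) (x : Fin m → ℤ), ∀ j, (∑ i, u i * d i j) + t * b j = N * x j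

variable {m n : ℕ} {d : Fin n → Fin m → ℤ} {b : Fin m → ℤ}

lemma S_mul_left {t N : ℤ} (h : S d b t N) (c : ℤ) : S d b (c * t) N := by
  obtain ⟨u, x, hux⟩ := h
  refine ⟨fun i => c * u i, fun j => c * x j, fun j => ?_⟩
  have := hux j
  calc (∑ i, c * u i * d i j) + c * t * b j
      = c * ((∑ i, u i * d i j) + t * b j) := by
        rw [mul_add, Finset.mul_sum]; ring_nf
    _ = N * (c * x j) := by rw [this]; ring

lemma S_scale {t N : ℤ} (h : S d b t N) (c : ℤ) : S d b (c * t) (c * N) := by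
  obtain ⟨u, x, hux⟩ := h
  refine ⟨fun i => c * u i, x, fun j => ?_⟩
  have := hux j
  calc (∑ i, c * u i * d i j) + c * t * b j
      = c * ((∑ i, u i * d i j) + t * b j) := by
        rw [mul_add, Finset.mul_sum]; ring_nf
    _ = c * N * x j := by rw [this]; ring

lemma S_shift {t N : ℤ} (k : ℤ) (h : S d b (t + k * N) N) : S d b t N := by
  obtain ⟨u, x, hux⟩ := h
  refine ⟨u, fun j => x j - k * b j, fun j => ?_⟩
  have := hux j
  have h2 : (∑ i, u i * d i j) + t * b j
      = ((∑ i, u i * d i j) + (t + k * N) * b j) - N * (k * b j) := by ring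
  rw [h2, this]; ring

lemma S_dvd {t N D : ℤ} (h : S d b t N) (hD : D ∣ N) : S d b t D := by
  obtain ⟨e, rfl⟩ := hD
  obtain ⟨u, x, hux⟩ := h
  exact ⟨u, fun j => e * x j, fun j => by rw [hux j]; ring⟩

lemma S_of_dvd {t N : ℤ} (h : N ∣ t) : S d b t N := by
  obtain ⟨e, rfl⟩ := h
  exact ⟨fun _ => 0, fun j => e * b j, fun j => by simp [Finset.sum_const_zero]; ring⟩

lemma S_one (t : ℤ) : S d b t 1 := S_of_dvd (one_dvd t)

lemma S_combine {t a c : ℤ} (hco : IsCoprime a c) (ha : S d b t a) (hc : S d b t c) :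
    S d b t (a * c) := by
  obtain ⟨A, B, hAB⟩ := hco
  obtain ⟨u1, x1, h1⟩ := ha
  obtain ⟨u2, x2, h2⟩ := hc
  refine ⟨fun i => B * c * u1 i + A * a * u2 i, fun j => B * x1 j + A * x2 j, fun j => ?_⟩
  have e1 := h1 j
  have e2 := h2 j
  have hs : (∑ i, (B * c * u1 i + A * a * u2 i) * d i j)
      = B * c * (∑ i, u1 i * d i j) + A * a * (∑ i, u2 i * d i j) := by
    rw [Finset.mul_sum, Finset.mul_sum, ← Finset.sum_add_distrib]
    exact Finset.sum_congr rfl fun i _ => by ring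
  linear_combination hs + B * c * e1 + A * a * e2 - t * b j * hAB

lemma S_cancel_unit {t N w : ℤ} (hco : IsCoprime w N) (h : S d b (w * t) N) :
    S d b t N := by
  obtain ⟨A, B, hAB⟩ := hco
  apply S_shift (-(B * t))
  have h2 := S_mul_left h A
  rw [show A * (w * t) = t + -(B * t) * N by linear_combination t * hAB] at h2
  exact h2

/-- `S t N` holds if it holds for every maximal prime power divisor of `N`. -/
lemma S_of_primePows {t : ℤ} : ∀ N : ℕ, 0 < N →
    (∀ r : ℕ, r.Prime → r ∣ N → S d b t ((r : ℤ) ^ (N.factorization r))) →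
    S d b t (N : ℤ) := by
  intro N
  induction N using Nat.strong_induction_on with
  | _ N ih =>
    intro hN hall
    rcases eq_or_lt_of_le (show 1 ≤ N from hN) with h1 | h1
    · rw [← h1]; exact_mod_cast S_one t
    · have hNne : N ≠ 0 := by omega
      set r := N.minFac with hr
      have hrp : r.Prime := Nat.minFac_prime (by omega)
      have hrdvd : r ∣ N := Nat.minFac_dvd N
      set e := N.factorization r with he
      have he1 : 1 ≤ e := (Nat.Prime.factorization_pos_of_dvd hrp hNne hrdvd)
      set h := N / r ^ e with hh
      have hsplit : r ^ e * h = N := Nat.ordProj_mul_ordCompl_eq_self N r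
      have hhpos : 0 < h := Nat.ordCompl_pos r hNne
      have hhlt : h < N := by
        have : 1 < r ^ e := by
          have := hrp.two_le
          calc 1 < r := by omega
            _ ≤ r ^ e := Nat.le_self_pow (by omega) r
        calc h = N / r ^ e := rfl
          _ < N := Nat.div_lt_self (by omega) this
      have hSh : S d b t (h : ℤ) := by
        apply ih h hhlt hhpos
        intro s hs hsh
        have hhN : h ∣ N := ⟨r ^ e, by rw [mul_comm]; omega⟩
        have hsN : s ∣ N := hsh.trans hhN
        have hsr : s ≠ r := by
          intro hcontra
          apply Nat.not_dvd_ordCompl hrp hNne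
          rw [← he, ← hh, ← hcontra]
          exact hsh
        have : h.factorization s = N.factorization s := by
          rw [hh, he, Nat.factorization_ordCompl N r, Finsupp.erase_ne hsr]
        rw [this]
        exact hall s hs hsN
      have hSr : S d b t ((r : ℤ) ^ e) := hall r hrp hrdvd
      have hcop : IsCoprime ((r : ℤ) ^ e) (h : ℤ) := by
        rw [show ((r : ℤ) ^ e) = ((r ^ e : ℕ) : ℤ) by push_cast; ring]
        rw [Nat.isCoprime_iff_coprime]
        exact Nat.Coprime.pow_left e (Nat.coprime_ordCompl hrp hNne)
      have := S_combine hcop hSr hSh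
      rw [show ((r : ℤ) ^ e * (h : ℤ)) = ((r ^ e * h : ℕ) : ℤ) by push_cast; ring,
        hsplit] at this
      exact this

section Main

variable (q : ℕ)

/-- `(q^ℓ - 1)/(q - 1)` as a natural number. -/
def Tn (ℓ : ℕ) : ℕ := ∑ i ∈ Finset.range ℓ, q ^ i

/-- `q^ℓ - 1` as a natural number. -/
def Nn (ℓ : ℕ) : ℕ := q ^ ℓ - 1

variable (hq2 : 2 ≤ q)

lemma Nn_eq (x : ℕ) (hx : 1 ≤ x) (ℓ : ℕ) : Nn x ℓ = (x - 1) * Tn x ℓ := by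
  have key : ((x : ℤ) ^ ℓ - 1) = ((x : ℤ) - 1) * (∑ i ∈ Finset.range ℓ, (x : ℤ) ^ i) := by
    rw [mul_comm, geom_sum_mul]
  have h1 : (1 : ℕ) ≤ x ^ ℓ := Nat.one_le_pow _ _ (by omega)
  apply Nat.cast_injective (R := ℤ)
  push_cast [Nn, Tn, h1, hx]
  rw [key]

lemma Tn_pos (x : ℕ) {ℓ : ℕ} (hl : 1 ≤ ℓ) : 0 < Tn x ℓ := by
  have : 0 < x ^ 0 := by positivity
  exact Finset.sum_pos' (fun i _ => Nat.zero_le _)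
    ⟨0, Finset.mem_range.2 (by omega), by simpa using this⟩

include hq2

lemma Nn_pos {ℓ : ℕ} (hl : 1 ≤ ℓ) : 0 < Nn q ℓ := by
  have : 2 ^ ℓ ≤ q ^ ℓ := Nat.pow_le_pow_left hq2 ℓ
  have : 2 ^ 1 ≤ 2 ^ ℓ := Nat.pow_le_pow_right (by omega) hl
  simp only [Nn]
  omega

/-- factorization of `Nn` splits as that of `q-1` plus that of `Tn`. -/
lemma fact_Nn {ℓ : ℕ} (hl : 1 ≤ ℓ) (r : ℕ) :
    (Nn q ℓ).factorization r = (q - 1).factorization r + (Tn q ℓ).factorization r := by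
  rw [Nn_eq q (by omega) ℓ, Nat.factorization_mul (by omega) (by
    have := Tn_pos q hl; omega)]
  simp

/-- Key valuation lemma: for a prime `r ∣ q - 1`,
`v_r(q^ℓ - 1) = v_r(q^(r^(v_r ℓ)) - 1)`. -/
lemma val_Nn {r : ℕ} (hr : r.Prime) (hrq : r ∣ q - 1) {ℓ : ℕ} (hl : 1 ≤ ℓ) :
    (Nn q ℓ).factorization r = (Nn q (r ^ (ℓ.factorization r))).factorization r := by
  haveI : NeZero r := ⟨hr.pos.ne'⟩
  set v := ℓ.factorization r with hv
  set s := ℓ / r ^ v with hs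
  have hℓeq : r ^ v * s = ℓ := Nat.ordProj_mul_ordCompl_eq_self ℓ r
  have hrs : ¬ r ∣ s := Nat.not_dvd_ordCompl hr (by omega)
  have hspos : 0 < s := Nat.ordCompl_pos r (by omega)
  have hrv1 : 1 ≤ r ^ v := Nat.one_le_pow _ _ hr.pos
  have hx2 : 2 ≤ q ^ (r ^ v) := by
    have h1 : 2 ^ (r ^ v) ≤ q ^ (r ^ v) := Nat.pow_le_pow_left hq2 _
    have h2 : 2 ^ 1 ≤ 2 ^ (r ^ v) := Nat.pow_le_pow_right (by omega) hrv1
    omega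
  have hkey : Nn q ℓ = Nn q (r ^ v) * Tn (q ^ (r ^ v)) s := by
    have h1 : Nn q ℓ = Nn (q ^ (r ^ v)) s := by
      simp only [Nn, ← pow_mul, hℓeq]
    have h2 : Nn q (r ^ v) = q ^ (r ^ v) - 1 := rfl
    rw [h1, Nn_eq (q ^ (r ^ v)) (by omega) s, h2]
  have hTnd : ¬ r ∣ Tn (q ^ (r ^ v)) s := by
    intro hdvd
    have hq1 : (q : ZMod r) = 1 := by
      have h0 : ((q - 1 : ℕ) : ZMod r) = 0 := (ZMod.natCast_eq_zero_iff _ _).2 hrq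
      have hq1' : q - 1 + 1 = q := by omega
      calc (q : ZMod r) = ((q - 1 + 1 : ℕ) : ZMod r) := by rw [hq1']
        _ = ((q - 1 : ℕ) : ZMod r) + 1 := by push_cast; ring
        _ = 1 := by rw [h0]; ring
    have hTval : ((Tn (q ^ (r ^ v)) s : ℕ) : ZMod r) = (s : ZMod r) := by
      simp only [Tn, Nat.cast_sum, Nat.cast_pow, hq1, one_pow]
      simp
    have h0 : ((Tn (q ^ (r ^ v)) s : ℕ) : ZMod r) = 0 :=
      (ZMod.natCast_eq_zero_iff _ _).2 hdvd
    rw [hTval] at h0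
    exact hrs ((ZMod.natCast_eq_zero_iff _ _).1 h0)
  have hne1 : Nn q (r ^ v) ≠ 0 := (Nn_pos q hq2 hrv1).ne'
  have hne2 : Tn (q ^ (r ^ v)) s ≠ 0 := (Tn_pos _ hspos).ne'
  rw [hkey, Nat.factorization_mul hne1 hne2]
  simp [Nat.factorization_eq_zero_of_not_dvd hTnd]

lemma val_Tn {r : ℕ} (hr : r.Prime) (hrq : r ∣ q - 1) {ℓ : ℕ} (hl : 1 ≤ ℓ) :
    (Tn q ℓ).factorization r = (Tn q (r ^ (ℓ.factorization r))).factorization r := by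
  have h1 := fact_Nn q hq2 hl r
  have h2 := fact_Nn q hq2 (ℓ := r ^ (ℓ.factorization r)) (Nat.one_le_pow _ _ hr.pos) r
  have h3 := val_Nn q hq2 hr hrq hl
  omega

variable {d : Fin n → Fin m → ℤ} {b : Fin m → ℤ}

/-- The solvability condition for level `ℓ`. -/
def C (ℓ : ℕ) : Prop := S d b ((Tn q ℓ : ℤ)) ((Nn q ℓ : ℤ))

/-- The per-prime condition, depending only on `v_r(ℓ)`. -/
def F (r v : ℕ) : Prop :=
  S d b ((r : ℤ) ^ ((Tn q (r ^ v)).factorization r)) ((r : ℤ) ^ ((Nn q (r ^ v)).factorization r))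

/-- Per-prime characterization of `C`. -/
lemma C_iff {ℓ : ℕ} (hl : 1 ≤ ℓ) :
    C q (d := d) (b := b) ℓ ↔
      ∀ r ∈ (q - 1).primeFactors, F q (d := d) (b := b) r (ℓ.factorization r) := by
  have hTpos : 0 < Tn q ℓ := Tn_pos q hl
  have hNpos : 0 < Nn q ℓ := Nn_pos q hq2 hl
  constructor
  · intro hC r hrP
    have hr : r.Prime := Nat.prime_of_mem_primeFactors hrP
    have hrq : r ∣ q - 1 := Nat.dvd_of_mem_primeFactors hrP
    set a := (Tn q ℓ).factorization r with ha
    set V := (Nn q ℓ).factorization r with hV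
    -- step 1 : S (Tn ℓ) (r ^ V)
    have h1 : S d b ((Tn q ℓ : ℕ) : ℤ) ((r : ℤ) ^ V) := by
      apply S_dvd hC
      have : (r : ℕ) ^ V ∣ Nn q ℓ := Nat.ordProj_dvd _ _
      exact_mod_cast Int.natCast_dvd_natCast.2 this
    -- step 2 : decompose Tn ℓ = w * r ^ a
    set w := Tn q ℓ / r ^ a with hw
    have hsplit : r ^ a * w = Tn q ℓ := Nat.ordProj_mul_ordCompl_eq_self _ r
    have hwr : ¬ r ∣ w := Nat.not_dvd_ordCompl hr hTpos.ne'
    have hcast : ((Tn q ℓ : ℕ) : ℤ) = (w : ℤ) * (r : ℤ) ^ a := by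
      push_cast [← hsplit]; ring
    rw [hcast] at h1
    have hco : IsCoprime ((w : ℕ) : ℤ) ((r : ℤ) ^ V) := by
      rw [show ((r : ℤ) ^ V) = ((r ^ V : ℕ) : ℤ) by push_cast; ring,
        Nat.isCoprime_iff_coprime]
      exact Nat.Coprime.pow_right V
        (((Nat.Prime.coprime_iff_not_dvd hr).2 hwr).symm)
    have h2 : S d b ((r : ℤ) ^ a) ((r : ℤ) ^ V) := S_cancel_unit hco h1
    have e1 : a = (Tn q (r ^ (ℓ.factorization r))).factorization r :=
      val_Tn q hq2 hr hrq hl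
    have e2 : V = (Nn q (r ^ (ℓ.factorization r))).factorization r :=
      val_Nn q hq2 hr hrq hl
    rw [e1, e2] at h2
    exact h2
  · intro hF
    have := S_of_primePows (d := d) (b := b) (t := ((Tn q ℓ : ℕ) : ℤ)) (Nn q ℓ) hNpos ?_
    · exact this
    intro s hs hsd
    set a := (Tn q ℓ).factorization s with ha
    set V := (Nn q ℓ).factorization s with hV
    by_cases hsq : s ∣ q - 1
    · have hsP : s ∈ (q - 1).primeFactors :=
        Nat.mem_primeFactors.2 ⟨hs, hsq, by omega⟩
      have hFs := hF s hsP
      have e1 : (Tn q (s ^ (ℓ.factorization s))).factorization s = a :=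
        (val_Tn q hq2 hs hsq hl).symm
      have e2 : (Nn q (s ^ (ℓ.factorization s))).factorization s = V :=
        (val_Nn q hq2 hs hsq hl).symm
      rw [F, e1, e2] at hFs
      set w := Tn q ℓ / s ^ a with hw
      have hsplit : s ^ a * w = Tn q ℓ := Nat.ordProj_mul_ordCompl_eq_self _ s
      have h3 := S_mul_left hFs ((w : ℕ) : ℤ)
      rw [show ((w : ℕ) : ℤ) * (s : ℤ) ^ a = ((Tn q ℓ : ℕ) : ℤ) by
        push_cast [← hsplit]; ring] at h3
      exact h3
    · -- s does not divide q - 1 : automatic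
      have hz : (q - 1).factorization s = 0 := Nat.factorization_eq_zero_of_not_dvd hsq
      have hVa : V = a := by have := fact_Nn q hq2 hl s; omega
      apply S_of_dvd
      rw [hVa]
      have : (s : ℕ) ^ a ∣ Tn q ℓ := Nat.ordProj_dvd _ _
      exact_mod_cast Int.natCast_dvd_natCast.2 this

lemma C_mul {ℓ k : ℕ} (hl : 1 ≤ ℓ) (hk : 1 ≤ k) (h : C q (d := d) (b := b) ℓ) :
    C q (d := d) (b := b) (k * ℓ) := by
  have hNid : Nn q (k * ℓ) = Nn q ℓ * Tn (q ^ ℓ) k := by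
    have h1 : Nn q (k * ℓ) = Nn (q ^ ℓ) k := by
      simp only [Nn, ← pow_mul, mul_comm ℓ k]
    have h2 : Nn q ℓ = q ^ ℓ - 1 := rfl
    rw [h1, Nn_eq (q ^ ℓ) (Nat.one_le_pow _ _ (by omega)) k, h2]
  have hTid : Tn q (k * ℓ) = Tn q ℓ * Tn (q ^ ℓ) k := by
    have e1 : (q - 1) * Tn q (k * ℓ) = (q - 1) * (Tn q ℓ * Tn (q ^ ℓ) k) := by
      rw [← Nn_eq q (by omega), hNid, Nn_eq q (by omega)]
      ring
    exact Nat.eq_of_mul_eq_mul_left (by omega) e1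
  have h2 := S_scale h ((Tn (q ^ ℓ) k : ℕ) : ℤ)
  rw [C, hNid, hTid]
  push_cast
  rw [mul_comm ((Tn q ℓ : ℕ) : ℤ), mul_comm ((Nn q ℓ : ℕ) : ℤ)] at *
  exact_mod_cast h2

lemma C_gcd {ℓ₁ ℓ₂ : ℕ} (h1 : 1 ≤ ℓ₁) (h2 : 1 ≤ ℓ₂)
    (hc1 : C q (d := d) (b := b) ℓ₁) (hc2 : C q (d := d) (b := b) ℓ₂) :
    C q (d := d) (b := b) (Nat.gcd ℓ₁ ℓ₂) := by
  have hg1 : 1 ≤ Nat.gcd ℓ₁ ℓ₂ := Nat.gcd_pos_of_pos_left ℓ₂ h1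
  rw [C_iff q hq2 hg1]
  intro r hrP
  have hfac : (Nat.gcd ℓ₁ ℓ₂).factorization r =
      min (ℓ₁.factorization r) (ℓ₂.factorization r) := by
    rw [Nat.factorization_gcd (by omega) (by omega)]
    rfl
  rcases le_total (ℓ₁.factorization r) (ℓ₂.factorization r) with hle | hle
  · rw [hfac, min_eq_left hle]
    exact (C_iff q hq2 h1).1 hc1 r hrP
  · rw [hfac, min_eq_right hle]
    exact (C_iff q hq2 h2).1 hc2 r hrP

lemma C_drop {r ℓ : ℕ} (hr : r.Prime) (hrq : ¬ r ∣ q - 1) (hl : 1 ≤ ℓ)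
    (h : C q (d := d) (b := b) (r * ℓ)) : C q (d := d) (b := b) ℓ := by
  have hrl : 1 ≤ r * ℓ := Nat.mul_pos hr.pos hl
  rw [C_iff q hq2 hl]
  intro s hsP
  have hs : s.Prime := Nat.prime_of_mem_primeFactors hsP
  have hsq : s ∣ q - 1 := Nat.dvd_of_mem_primeFactors hsP
  have hsr : s ≠ r := fun hc => hrq (hc ▸ hsq)
  have hfac : (r * ℓ).factorization s = ℓ.factorization s := by
    rw [Nat.factorization_mul hr.pos.ne' (by omega)]
    simp [hr.factorization, Finsupp.single_apply, (Ne.symm hsr)]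
  have := (C_iff q hq2 hrl).1 h s hsP
  rwa [hfac] at this

lemma cast_Nn (ℓ : ℕ) : ((Nn q ℓ : ℕ) : ℤ) = (q : ℤ) ^ ℓ - 1 := by
  have h1 : (1 : ℕ) ≤ q ^ ℓ := Nat.one_le_pow _ _ (by omega)
  push_cast [Nn, h1]
  ring

lemma cast_Tn_div (ℓ : ℕ) :
    ((q : ℤ) ^ ℓ - 1) / ((q : ℤ) - 1) = ((Tn q ℓ : ℕ) : ℤ) := by
  have hTi : ((q : ℤ) - 1) * ((Tn q ℓ : ℕ) : ℤ) = (q : ℤ) ^ ℓ - 1 := by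
    have : ((Tn q ℓ : ℕ) : ℤ) = ∑ i ∈ Finset.range ℓ, (q : ℤ) ^ i := by
      push_cast [Tn]; ring
    rw [this, mul_comm, geom_sum_mul]
  rw [← hTi, Int.mul_ediv_cancel_left _ (by
    have : (2 : ℤ) ≤ (q : ℤ) := by exact_mod_cast hq2
    omega)]

lemma mem_Lambda_iff {ℓ : ℕ} :
    ℓ ∈ Lambda q d b ↔ 1 ≤ ℓ ∧ C q (d := d) (b := b) ℓ := by
  constructor
  · rintro ⟨hl, u, hub, hud⟩
    refine ⟨hl, ?_⟩
    have hud' : ∀ j, ((Nn q ℓ : ℕ) : ℤ) ∣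
        (∑ i, ((u i : ℕ) : ℤ) * d i j) + ((Tn q ℓ : ℕ) : ℤ) * b j := by
      intro j
      have := hud j
      rwa [cast_Tn_div q hq2, ← cast_Nn q hq2] at this
    have h2 : ∀ j, ∃ c, (∑ i, ((u i : ℕ) : ℤ) * d i j) + ((Tn q ℓ : ℕ) : ℤ) * b j
        = ((Nn q ℓ : ℕ) : ℤ) * c := fun j => (hud' j)
    choose x hx using h2
    exact ⟨fun i => ((u i : ℕ) : ℤ), x, hx⟩
  · rintro ⟨hl, u, x, hux⟩
    refine ⟨hl, ?_⟩
    have hNpos : 0 < Nn q ℓ := Nn_pos q hq2 hl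
    set N : ℤ := ((Nn q ℓ : ℕ) : ℤ) with hN
    have hNpos' : 0 < N := by rw [hN]; exact_mod_cast hNpos
    refine ⟨fun i => (u i % N).toNat, fun i => ?_, fun j => ?_⟩
    · show (u i % N).toNat ≤ q ^ ℓ - 1
      have h1 : 0 ≤ u i % N := Int.emod_nonneg _ hNpos'.ne'
      have h2 : u i % N < N := Int.emod_lt_of_pos _ hNpos'
      have h3 : (Nn q ℓ : ℕ) = q ^ ℓ - 1 := rfl
      have h4 : N = ((Nn q ℓ : ℕ) : ℤ) := hN
      omega
    · rw [cast_Tn_div q hq2, ← cast_Nn q hq2, ← hN]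
      have hcast : ∀ i, (((u i % N).toNat : ℕ) : ℤ) = u i % N := fun i =>
        Int.toNat_of_nonneg (Int.emod_nonneg _ hNpos'.ne')
      have hsum : (∑ i, (((u i % N).toNat : ℕ) : ℤ) * d i j)
          = (∑ i, u i * d i j) + ∑ i, (u i % N - u i) * d i j := by
        rw [← Finset.sum_add_distrib]
        exact Finset.sum_congr rfl fun i _ => by rw [hcast i]; ring
      rw [hsum]
      have hdvd1 : N ∣ ∑ i, (u i % N - u i) * d i j := by
        apply Finset.dvd_sum
        intro i _
        apply Dvd.dvd.mul_right
        have : u i % N - u i = N * (-(u i / N)) := by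
          rw [Int.emod_def]; ring
        exact ⟨-(u i / N), this⟩
      have hdvd2 : N ∣ (∑ i, u i * d i j) + ((Tn q ℓ : ℕ) : ℤ) * b j :=
        ⟨x j, hux j⟩
      have := Int.dvd_add hdvd2 hdvd1
      rwa [show (∑ i, u i * d i j) + ((Tn q ℓ : ℕ) : ℤ) * b j
          + ∑ i, (u i % N - u i) * d i j
          = ((∑ i, u i * d i j) + ∑ i, (u i % N - u i) * d i j)
            + ((Tn q ℓ : ℕ) : ℤ) * b j by ring] at this

end Main

end StmtAux

/-- If `Λ(D, b)` is nonempty then it equals `{kℓ₀ : k ≥ 1}` for some `ℓ₀ ≥ 1` all of whose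
prime factors divide `q - 1`. -/
theorem stmt3 (p f m n : ℕ) (hp : p.Prime) (hf : 1 ≤ f) (hm : 1 ≤ m) (hn : 1 ≤ n)
    (q : ℕ) (hq : q = p ^ f)
    (d : Fin n → Fin m → ℤ) (b : Fin m → ℤ) (hb : ∀ j, 0 ≤ b j ∧ b j ≤ (q : ℤ) - 2)
    (h : (Lambda q d b).Nonempty) :
    ∃ ℓ₀ : ℕ, 1 ≤ ℓ₀ ∧ (∀ r : ℕ, r.Prime → r ∣ ℓ₀ → r ∣ q - 1) ∧
      Lambda q d b = {x | ∃ k : ℕ, 1 ≤ k ∧ x = k * ℓ₀} := by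
  have hq2 : 2 ≤ q := by
    rw [hq]
    calc 2 ≤ p := hp.two_le
      _ ≤ p ^ f := Nat.le_self_pow (by omega) p
  obtain ⟨ℓs, hℓs⟩ := h
  rw [StmtAux.mem_Lambda_iff q hq2] at hℓs
  have hGne : {ℓ : ℕ | 1 ≤ ℓ ∧ StmtAux.C q (d := d) (b := b) ℓ}.Nonempty := ⟨ℓs, hℓs⟩
  set ℓ₀ := sInf {ℓ : ℕ | 1 ≤ ℓ ∧ StmtAux.C q (d := d) (b := b) ℓ} with hℓ₀
  have hmem : ℓ₀ ∈ {ℓ : ℕ | 1 ≤ ℓ ∧ StmtAux.C q (d := d) (b := b) ℓ} := Nat.sInf_mem hGne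
  have hℓ₀1 : 1 ≤ ℓ₀ := hmem.1
  have hℓ₀C : StmtAux.C q (d := d) (b := b) ℓ₀ := hmem.2
  refine ⟨ℓ₀, hℓ₀1, ?_, ?_⟩
  · intro r hr hrdvd
    by_contra hrq
    obtain ⟨ℓ', hℓ'⟩ := hrdvd
    have hℓ'1 : 1 ≤ ℓ' := by
      rcases Nat.eq_zero_or_pos ℓ' with h0 | h0
      · rw [h0, mul_zero] at hℓ'; omega
      · exact h0
    have hC' : StmtAux.C q (d := d) (b := b) ℓ' :=
      StmtAux.C_drop q hq2 hr hrq hℓ'1 (by rw [← hℓ']; exact hℓ₀C)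
    have hmem' : ℓ' ∈ {ℓ : ℕ | 1 ≤ ℓ ∧ StmtAux.C q (d := d) (b := b) ℓ} := ⟨hℓ'1, hC'⟩
    have hle : ℓ₀ ≤ ℓ' := Nat.sInf_le hmem'
    have h2r : 2 * ℓ' ≤ r * ℓ' := Nat.mul_le_mul_right _ hr.two_le
    omega
  · ext x
    simp only [Set.mem_setOf_eq]
    rw [StmtAux.mem_Lambda_iff q hq2]
    constructor
    · intro hx
      have hx1 : 1 ≤ x := hx.1
      have hgcd : Nat.gcd x ℓ₀ ∈ {ℓ : ℕ | 1 ≤ ℓ ∧ StmtAux.C q (d := d) (b := b) ℓ} :=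
        ⟨Nat.gcd_pos_of_pos_left ℓ₀ hx1, StmtAux.C_gcd q hq2 hx1 hℓ₀1 hx.2 hℓ₀C⟩
      have h1 : ℓ₀ ≤ Nat.gcd x ℓ₀ := Nat.sInf_le hgcd
      have h2 : Nat.gcd x ℓ₀ ∣ ℓ₀ := Nat.gcd_dvd_right x ℓ₀
      have h3 : Nat.gcd x ℓ₀ = ℓ₀ := Nat.le_antisymm (Nat.le_of_dvd (by omega) h2) h1
      have h4 : ℓ₀ ∣ x := h3 ▸ Nat.gcd_dvd_left x ℓ₀
      obtain ⟨k, hk⟩ := h4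
      refine ⟨k, ?_, by rw [hk, mul_comm]⟩
      rcases Nat.eq_zero_or_pos k with h0 | h0
      · rw [h0, mul_zero] at hk; omega
      · exact h0
    · rintro ⟨k, hk1, rfl⟩
      refine ⟨?_, StmtAux.C_mul q hq2 hℓ₀1 hk1 hℓ₀C⟩
      calc 1 ≤ 1 * 1 := le_rfl
        _ ≤ k * ℓ₀ := Nat.mul_le_mul hk1 hℓ₀1
end

section
/- Let ℓ ≥ 1 and u ∈ L(D, q^ℓ, b_ℓ), and write each u_i = Σ_{k=0}^{ℓ−1} u_{i,k} q^k in base q with digits u_{i,k} ∈ {0, …, q−1}. Then for every integer k with 0 ≤ k ≤ ℓ−1, q·Φ_u(ℓ−(k+1)) − Φ_u(ℓ−k) = Σ_{i=1}^n u_{i,k} d_i + b, where the arguments of Φ_u are taken modulo ℓ. In particular (k = ℓ−1), q·Φ_u(0) − Φ_u(1) = Σ_{i=1}^n u_{i,ℓ−1} d_i + b. -/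
open Finset

/-- `delta q ℓ` fixes `q^ℓ-1` and otherwise sends `x` to `q·x mod (q^ℓ-1)`. -/
def delta (q ℓ : ℕ) (x : ℕ) : ℕ :=
  if x = q ^ ℓ - 1 then q ^ ℓ - 1 else (q * x) % (q ^ ℓ - 1)

/-- `phi q ℓ d b u = (∑ uᵢ dᵢ + b_ℓ)/(q^ℓ-1) ∈ ℤ^m`, so that
`Φ_u(t) = phi q ℓ d b (δ_ℓ^t ∘ u)`. -/
def phi (q ℓ : ℕ) {m n : ℕ} (d : Fin n → Fin m → ℤ) (b : Fin m → ℤ) (u : Fin n → ℕ) :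
    Fin m → ℤ :=
  fun j => (∑ i, (u i : ℤ) * d i j + ((q : ℤ) ^ ℓ - 1) / ((q : ℤ) - 1) * b j)
    / ((q : ℤ) ^ ℓ - 1)

private lemma sum_digits_le (q ℓ : ℕ) (hq : 2 ≤ q) (c : ℕ → ℕ) (hc : ∀ k, c k ≤ q - 1) :
    ∑ k ∈ Finset.range ℓ, c k * q ^ k ≤ q ^ ℓ - 1 := by
  induction ℓ with
  | zero => simp
  | succ ℓ ih =>
    rw [Finset.sum_range_succ]
    have h1 : c ℓ * q ^ ℓ ≤ (q - 1) * q ^ ℓ := Nat.mul_le_mul_right _ (hc ℓ)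
    have h2 : (q - 1) * q ^ ℓ = q ^ (ℓ + 1) - q ^ ℓ := by
      rw [Nat.sub_mul, one_mul, ← pow_succ']
    have h4 : 1 ≤ q ^ ℓ := Nat.one_le_pow _ _ (by omega)
    have h5 : q ^ ℓ ≤ q ^ (ℓ + 1) := Nat.pow_le_pow_right (by omega) (by omega)
    omega

private lemma sum_digits_max (q ℓ : ℕ) (hq : 2 ≤ q) (c : ℕ → ℕ)
    (hc : ∀ k, k < ℓ → c k = q - 1) :
    ∑ k ∈ Finset.range ℓ, c k * q ^ k = q ^ ℓ - 1 := by
  induction ℓ with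
  | zero => simp
  | succ ℓ ih =>
    rw [Finset.sum_range_succ, ih (fun k hk => hc k (by omega)), hc ℓ (by omega)]
    have h2 : (q - 1) * q ^ ℓ = q ^ (ℓ + 1) - q ^ ℓ := by
      rw [Nat.sub_mul, one_mul, ← pow_succ']
    have h4 : 1 ≤ q ^ ℓ := Nat.one_le_pow _ _ (by omega)
    have h5 : q ^ ℓ ≤ q ^ (ℓ + 1) := Nat.pow_le_pow_right (by omega) (by omega)
    omega

private lemma sum_digits_eq_max (q ℓ : ℕ) (hq : 2 ≤ q) (c : ℕ → ℕ) (hc : ∀ k, c k ≤ q - 1)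
    (h : ∑ k ∈ Finset.range ℓ, c k * q ^ k = q ^ ℓ - 1) :
    ∀ k, k < ℓ → c k = q - 1 := by
  by_contra hcon
  push_neg at hcon
  obtain ⟨k0, hk0, hne⟩ := hcon
  have hlt : ∑ k ∈ Finset.range ℓ, c k * q ^ k
      < ∑ k ∈ Finset.range ℓ, (q - 1) * q ^ k := by
    refine Finset.sum_lt_sum (fun k _ => Nat.mul_le_mul_right _ (hc k)) ?_
    refine ⟨k0, Finset.mem_range.mpr hk0, ?_⟩
    have hp : 0 < q ^ k0 := pow_pos (by omega) _
    have hlt' : c k0 < q - 1 := lt_of_le_of_ne (hc k0) hne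
    exact Nat.mul_lt_mul_of_lt_of_le hlt' (le_refl _) hp
  rw [sum_digits_max q ℓ hq (fun _ => q - 1) (fun _ _ => rfl), h] at hlt
  omega

private lemma rotate_step (q ℓ : ℕ) (hℓ : 1 ≤ ℓ) (c : ℕ → ℕ) :
    (q : ℤ) * ∑ k ∈ Finset.range ℓ, (c k : ℤ) * (q : ℤ) ^ k
      = ∑ k ∈ Finset.range ℓ, (c ((k + ℓ - 1) % ℓ) : ℤ) * (q : ℤ) ^ k
        + (c (ℓ - 1) : ℤ) * ((q : ℤ) ^ ℓ - 1) := by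
  obtain ⟨ℓ', rfl⟩ : ∃ ℓ', ℓ = ℓ' + 1 := ⟨ℓ - 1, by omega⟩
  rw [Finset.sum_range_succ (fun k => (c k : ℤ) * (q : ℤ) ^ k),
      Finset.sum_range_succ' (fun k => (c ((k + (ℓ' + 1) - 1) % (ℓ' + 1)) : ℤ) * (q : ℤ) ^ k)]
  have h0 : (0 + (ℓ' + 1) - 1) % (ℓ' + 1) = ℓ' := by
    simp [Nat.mod_eq_of_lt]
  have h1 : ∑ k ∈ Finset.range ℓ', (c ((k + 1 + (ℓ' + 1) - 1) % (ℓ' + 1)) : ℤ) * (q : ℤ) ^ (k + 1)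
      = (q : ℤ) * ∑ k ∈ Finset.range ℓ', (c k : ℤ) * (q : ℤ) ^ k := by
    rw [Finset.mul_sum]
    refine Finset.sum_congr rfl fun k hk => ?_
    have hidx : (k + 1 + (ℓ' + 1) - 1) % (ℓ' + 1) = k := by
      have h : k + 1 + (ℓ' + 1) - 1 = k + (ℓ' + 1) := by omega
      have hklt : k < ℓ' := Finset.mem_range.mp hk
      rw [h, Nat.add_mod_right, Nat.mod_eq_of_lt (by omega)]
    rw [hidx]; ring
  rw [h0, h1]
  have h2 : (ℓ' + 1 - 1) = ℓ' := by omega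
  rw [h2]
  ring

private lemma delta_rep (q ℓ : ℕ) (hq : 2 ≤ q) (hℓ : 1 ≤ ℓ) (c : ℕ → ℕ)
    (hc : ∀ k, c k ≤ q - 1) :
    delta q ℓ (∑ k ∈ Finset.range ℓ, c k * q ^ k)
      = ∑ k ∈ Finset.range ℓ, c ((k + ℓ - 1) % ℓ) * q ^ k := by
  have hpow : 1 ≤ q ^ ℓ := Nat.one_le_pow _ _ (by omega)
  have hxle : ∑ k ∈ Finset.range ℓ, c k * q ^ k ≤ q ^ ℓ - 1 := sum_digits_le q ℓ hq c hc
  have hyle : ∑ k ∈ Finset.range ℓ, c ((k + ℓ - 1) % ℓ) * q ^ k ≤ q ^ ℓ - 1 :=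
    sum_digits_le q ℓ hq _ (fun k => hc _)
  have key : q * ∑ k ∈ Finset.range ℓ, c k * q ^ k
      = (∑ k ∈ Finset.range ℓ, c ((k + ℓ - 1) % ℓ) * q ^ k) + c (ℓ - 1) * (q ^ ℓ - 1) := by
    have hz := rotate_step q ℓ hℓ c
    zify [hpow]
    push_cast
    exact hz
  by_cases hcase : ∑ k ∈ Finset.range ℓ, c k * q ^ k = q ^ ℓ - 1
  · have hall : ∀ k, k < ℓ → c k = q - 1 := sum_digits_eq_max q ℓ hq c hc hcase
    have hy' : ∑ k ∈ Finset.range ℓ, c ((k + ℓ - 1) % ℓ) * q ^ k = q ^ ℓ - 1 :=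
      sum_digits_max q ℓ hq _ (fun k hk => hall _ (Nat.mod_lt _ (by omega)))
    rw [delta, if_pos hcase, hy']
  · have hylt : ∑ k ∈ Finset.range ℓ, c ((k + ℓ - 1) % ℓ) * q ^ k < q ^ ℓ - 1 := by
      rcases Nat.lt_or_ge (∑ k ∈ Finset.range ℓ, c ((k + ℓ - 1) % ℓ) * q ^ k) (q ^ ℓ - 1)
        with h | h
      · exact h
      · exfalso
        have hyeq : ∑ k ∈ Finset.range ℓ, c ((k + ℓ - 1) % ℓ) * q ^ k = q ^ ℓ - 1 :=
          le_antisymm hyle h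
        have hall' : ∀ k, k < ℓ → c ((k + ℓ - 1) % ℓ) = q - 1 :=
          sum_digits_eq_max q ℓ hq _ (fun k => hc _) hyeq
        have hall : ∀ k, k < ℓ → c k = q - 1 := by
          intro k hk
          have h1 := hall' ((k + 1) % ℓ) (Nat.mod_lt _ (by omega))
          have h2 : ((k + 1) % ℓ + ℓ - 1) % ℓ = k := by
            have ha1 : (k + 1) % ℓ + ℓ - 1 = (k + 1) % ℓ + (ℓ - 1) := by omega
            rw [ha1, Nat.mod_add_mod]
            have ha2 : k + 1 + (ℓ - 1) = k + ℓ := by omega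
            rw [ha2, Nat.add_mod_right, Nat.mod_eq_of_lt hk]
          rw [h2] at h1; exact h1
        exact hcase (sum_digits_max q ℓ hq c hall)
    rw [delta, if_neg hcase, key, Nat.add_mul_mod_self_right,
        Nat.mod_eq_of_lt hylt]

private lemma idx_shift (ℓ t k : ℕ) (hℓ : 1 ≤ ℓ) :
    ((k + ℓ - 1) % ℓ + (ℓ - 1) * t) % ℓ = (k + (ℓ - 1) * (t + 1)) % ℓ := by
  rw [Nat.mod_add_mod, Nat.mul_succ]
  have h : k + ℓ - 1 + (ℓ - 1) * t = k + ((ℓ - 1) * t + (ℓ - 1)) := by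
    set A := (ℓ - 1) * t
    omega
  rw [h]

private lemma iter_delta_rep (q ℓ : ℕ) (hq : 2 ≤ q) (hℓ : 1 ≤ ℓ) (c : ℕ → ℕ)
    (hc : ∀ k, c k ≤ q - 1) (t : ℕ) :
    (delta q ℓ)^[t] (∑ k ∈ Finset.range ℓ, c k * q ^ k)
      = ∑ k ∈ Finset.range ℓ, c ((k + (ℓ - 1) * t) % ℓ) * q ^ k := by
  induction t with
  | zero =>
    simp only [Function.iterate_zero, id_eq, Nat.mul_zero, Nat.add_zero]
    exact (Finset.sum_congr rfl fun k hk => by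
      rw [Nat.mod_eq_of_lt (Finset.mem_range.mp hk)]).symm
  | succ t ih =>
    rw [Function.iterate_succ_apply', ih,
        delta_rep q ℓ hq hℓ _ (fun k => hc _)]
    refine Finset.sum_congr rfl fun k hk => ?_
    rw [idx_shift ℓ t k hℓ]

/-- If `u ∈ L(D, q^ℓ, b_ℓ)` with base-`q` digits `uᵢ = ∑_k u_{i,k} q^k`,
then for `0 ≤ k ≤ ℓ-1`, `q·Φ_u(ℓ-(k+1)) − Φ_u(ℓ-k) = ∑ᵢ u_{i,k} dᵢ + b`. -/
theorem stmt10 (p f m n : ℕ) (hp : p.Prime) (hf : 1 ≤ f) (hm : 1 ≤ m) (hn : 1 ≤ n)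
    (q : ℕ) (hq : q = p ^ f)
    (d : Fin n → Fin m → ℤ) (b : Fin m → ℤ) (hb : ∀ j, 0 ≤ b j ∧ b j ≤ (q : ℤ) - 2)
    (ℓ : ℕ) (hℓ : 1 ≤ ℓ) (u : Fin n → ℕ) (hu : u ∈ Lset q ℓ d b)
    (a : Fin n → ℕ → ℕ) (ha : ∀ i k, a i k ≤ q - 1)
    (hrep : ∀ i, u i = ∑ k ∈ Finset.range ℓ, a i k * q ^ k) :
    ∀ k, k ≤ ℓ - 1 → ∀ j,
      (q : ℤ) * phi q ℓ d b (fun i => (delta q ℓ)^[ℓ - (k + 1)] (u i)) j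
        - phi q ℓ d b (fun i => (delta q ℓ)^[ℓ - k] (u i)) j
      = ∑ i, (a i k : ℤ) * d i j + b j := by
  intro k0 hk0 j
  have hq2 : 2 ≤ q := by
    subst hq
    exact le_trans hp.two_le (Nat.le_self_pow (by omega) p)
  simp only [Lset, Set.mem_setOf_eq] at hu
  -- digit representation of iterates
  have e : ∀ t i, (delta q ℓ)^[t] (u i)
      = ∑ k ∈ Finset.range ℓ, a i ((k + (ℓ - 1) * t) % ℓ) * q ^ k := by
    intro t i
    rw [hrep i]
    exact iter_delta_rep q ℓ hq2 hℓ (a i) (fun k => ha i k) t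
  -- one-step relation per coordinate
  have hrel : ∀ t i, (q : ℤ) * ((delta q ℓ)^[t] (u i) : ℤ)
      = ((delta q ℓ)^[t + 1] (u i) : ℤ)
        + (a i ((ℓ - 1 + (ℓ - 1) * t) % ℓ) : ℤ) * ((q : ℤ) ^ ℓ - 1) := by
    intro t i
    rw [e t i, e (t + 1) i]
    push_cast
    have hz := rotate_step q ℓ hℓ (fun k => a i ((k + (ℓ - 1) * t) % ℓ))
    refine hz.trans ?_
    congr 1
    refine Finset.sum_congr rfl fun k hk => ?_
    rw [idx_shift ℓ t k hℓ]
  -- divisibility relation identity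
  have hid : ∀ t, (q : ℤ) * (∑ i, ((delta q ℓ)^[t] (u i) : ℤ) * d i j
        + ((q : ℤ) ^ ℓ - 1) / ((q : ℤ) - 1) * b j)
      = (∑ i, ((delta q ℓ)^[t + 1] (u i) : ℤ) * d i j
          + ((q : ℤ) ^ ℓ - 1) / ((q : ℤ) - 1) * b j)
        + (∑ i, (a i ((ℓ - 1 + (ℓ - 1) * t) % ℓ) : ℤ) * d i j + b j) * ((q : ℤ) ^ ℓ - 1) := by
    intro t
    have hgeo : ((q : ℤ) ^ ℓ - 1) / ((q : ℤ) - 1) * ((q : ℤ) - 1) = (q : ℤ) ^ ℓ - 1 :=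
      Int.ediv_mul_cancel ⟨∑ i ∈ Finset.range ℓ, (q : ℤ) ^ i, by rw [← geom_sum_mul, mul_comm]⟩
    have hsum2 : (q : ℤ) * ∑ i, ((delta q ℓ)^[t] (u i) : ℤ) * d i j
        = ∑ i, ((delta q ℓ)^[t + 1] (u i) : ℤ) * d i j
          + (∑ i, (a i ((ℓ - 1 + (ℓ - 1) * t) % ℓ) : ℤ) * d i j) * ((q : ℤ) ^ ℓ - 1) := by
      rw [Finset.mul_sum, Finset.sum_mul, ← Finset.sum_add_distrib]
      exact Finset.sum_congr rfl fun i _ => by linear_combination (d i j) * hrel t i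
    linear_combination hsum2 + (b j) * hgeo
  -- divisibility
  have hdvd : ∀ t, ((q : ℤ) ^ ℓ - 1) ∣ (∑ i, ((delta q ℓ)^[t] (u i) : ℤ) * d i j
      + ((q : ℤ) ^ ℓ - 1) / ((q : ℤ) - 1) * b j) := by
    intro t
    induction t with
    | zero => simpa using hu.2 j
    | succ t ih =>
      have h2 := ih.mul_left (q : ℤ)
      rw [hid t] at h2
      have h3 : (∑ i, ((delta q ℓ)^[t + 1] (u i) : ℤ) * d i j
            + ((q : ℤ) ^ ℓ - 1) / ((q : ℤ) - 1) * b j)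
          = ((∑ i, ((delta q ℓ)^[t + 1] (u i) : ℤ) * d i j
              + ((q : ℤ) ^ ℓ - 1) / ((q : ℤ) - 1) * b j)
            + (∑ i, (a i ((ℓ - 1 + (ℓ - 1) * t) % ℓ) : ℤ) * d i j + b j) * ((q : ℤ) ^ ℓ - 1))
          - (∑ i, (a i ((ℓ - 1 + (ℓ - 1) * t) % ℓ) : ℤ) * d i j + b j) * ((q : ℤ) ^ ℓ - 1) := by
        ring
      rw [h3]
      exact dvd_sub h2 (dvd_mul_left _ _)
  -- conclude
  have htt : ℓ - k0 = (ℓ - (k0 + 1)) + 1 := by omega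
  have hidx0 : (ℓ - 1 + (ℓ - 1) * (ℓ - (k0 + 1))) % ℓ = k0 := by
    obtain ⟨s, hs⟩ : ∃ s, ℓ = k0 + 1 + s := ⟨ℓ - (k0 + 1), by omega⟩
    subst hs
    have h1 : k0 + 1 + s - 1 = k0 + s := by omega
    have h2 : k0 + 1 + s - (k0 + 1) = s := by omega
    rw [h1, h2]
    have h3 : k0 + s + (k0 + s) * s = (k0 + 1 + s) * s + k0 := by ring
    rw [h3, Nat.mul_add_mod, Nat.mod_eq_of_lt (by omega)]
  obtain ⟨s, hs⟩ := hdvd (ℓ - (k0 + 1))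
  obtain ⟨s', hs'⟩ := hdvd ((ℓ - (k0 + 1)) + 1)
  have hq2' : (2 : ℤ) ≤ (q : ℤ) := by exact_mod_cast hq2
  have hN2 : (2 : ℤ) ≤ (q : ℤ) ^ ℓ :=
    le_trans hq2' (le_self_pow₀ (by linarith) (by omega))
  have hNne : ((q : ℤ) ^ ℓ - 1) ≠ 0 := by intro h0; linarith
  have hmain := hid (ℓ - (k0 + 1))
  rw [hs, hs', hidx0] at hmain
  rw [htt]
  simp only [phi]
  rw [hs, hs', Int.mul_ediv_cancel_left _ hNne, Int.mul_ediv_cancel_left _ hNne]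
  apply mul_left_cancel₀ hNne
  linear_combination hmain
end

section
/- Let ℓ ≥ 1, u ∈ L(D, q^ℓ, b_ℓ), and 1 ≤ t ≤ ℓ−1. Write u_i = q^t·w_i + v_i with 0 ≤ v_i < q^t for each 1 ≤ i ≤ n. Then Σ_{i=1}^n v_i d_i + b_t = q^t·Φ_u(−t) − Φ_u(0) and Σ_{i=1}^n w_i d_i + b_{ℓ−t} = q^{ℓ−t}·Φ_u(0) − Φ_u(−t), where the arguments of Φ_u are taken modulo ℓ. -/
open Finset

lemma geom_div' (q : ℕ) (hq : 2 ≤ q) (k : ℕ) :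
    ((q:ℤ)^k - 1) / ((q:ℤ) - 1) = ∑ i ∈ Finset.range k, (q:ℤ)^i := by
  have h : ((q:ℤ) - 1) ≠ 0 := by
    have : (2:ℤ) ≤ (q:ℤ) := by exact_mod_cast hq
    omega
  rw [← geom_sum_mul (q:ℤ) k, Int.mul_ediv_cancel _ h]

lemma key_geom' (x : ℤ) (s k : ℕ) :
    (x^s - 1) * ∑ i ∈ Finset.range k, x^i = (x^k - 1) * ∑ i ∈ Finset.range s, x^i := by
  have h1 := geom_sum_mul x s
  have h2 := geom_sum_mul x k
  linear_combination (∑ i ∈ Finset.range s, x^i) * h2 - (∑ i ∈ Finset.range k, x^i) * h1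

lemma delta_iter' (q ℓ s x : ℕ) (hq : 2 ≤ q) (hl : 1 ≤ ℓ) (hx : x ≤ q^ℓ - 1) :
    (delta q ℓ)^[s] x = if x = q ^ ℓ - 1 then q ^ ℓ - 1 else (q ^ s * x) % (q ^ ℓ - 1) := by
  have hN2 : 2 ≤ q ^ ℓ := le_trans hq (Nat.le_self_pow (by omega) q)
  induction s with
  | zero =>
    simp only [Function.iterate_zero, id_eq, pow_zero, one_mul]
    split
    · omega
    · exact (Nat.mod_eq_of_lt (by omega)).symm
  | succ s ih =>
    rw [Function.iterate_succ_apply', ih]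
    by_cases h : x = q ^ ℓ - 1
    · rw [if_pos h, if_pos h, delta, if_pos rfl]
    · rw [if_neg h, if_neg h, delta,
        if_neg (by have := Nat.mod_lt (q ^ s * x) (show 0 < q^ℓ - 1 by omega); omega)]
      rw [Nat.mul_mod_mod]
      congr 1
      ring

lemma delta_core' (A C x w v : ℕ) (hA : 2 ≤ A) (hC : 2 ≤ C)
    (hx : x ≤ A*C - 1) (hxe : x = A*w + v) (hv : v < A) :
    (if x = A*C - 1 then A*C - 1 else (C*x) % (A*C - 1)) = C*v + w := by
  have hP : 2*2 ≤ A*C := Nat.mul_le_mul hA hC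
  have hw : w < C := by
    rcases Nat.lt_or_ge w C with h | h
    · exact h
    · exfalso
      have := Nat.mul_le_mul_left A h
      omega
  by_cases hxQ : x = A*C - 1
  · rw [if_pos hxQ]
    have hw2 : w = C - 1 := by
      rcases Nat.lt_or_ge w (C-1) with h | h
      · exfalso
        have h1 : A*w ≤ A*(C-2) := Nat.mul_le_mul_left A (by omega)
        have h2 : A*(C-2) + A*2 = A*C := by rw [← Nat.mul_add]; congr 1; omega
        omega
      · omega
    subst hw2
    have h1 : A*(C-1) + A*1 = A*C := by rw [← Nat.mul_add]; congr 1; omega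
    have hv2 : v = A - 1 := by omega
    subst hv2
    have h3 : C*(A-1) + C*1 = C*A := by rw [← Nat.mul_add]; congr 1; omega
    have h4 : C*A = A*C := Nat.mul_comm C A
    omega
  · rw [if_neg hxQ]
    have hxlt : x < A*C - 1 := by omega
    have hk1 : C*x = A*C*w + C*v := by rw [hxe]; ring
    have hk2 : (A*C-1)*w + 1*w = A*C*w := by rw [← Nat.add_mul]; congr 1; omega
    have hlt : C*v + w < A*C - 1 := by
      rcases Nat.lt_or_ge v (A-1) with h | h
      · have h1 : C*v ≤ C*(A-2) := Nat.mul_le_mul_left C (by omega)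
        have h2 : C*(A-2) + C*2 = C*A := by rw [← Nat.mul_add]; congr 1; omega
        have h4 : C*A = A*C := Nat.mul_comm C A
        omega
      · have hv2 : v = A - 1 := by omega
        subst hv2
        have h1 : A*w + A*1 = A*(w+1) := by ring
        have h2 : A*(w+1) ≤ A*C - 1 := by omega
        have h3 : w + 1 < C := by
          rcases Nat.lt_or_ge (w+1) C with h' | h'
          · exact h'
          · exfalso
            have := Nat.mul_le_mul_left A h'
            omega
        have h4 : C*(A-1) + C*1 = C*A := by rw [← Nat.mul_add]; congr 1; omega
        have h5 : C*A = A*C := Nat.mul_comm C A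
        omega
    have hkey : C*x = (A*C-1)*w + (C*v + w) := by omega
    rw [hkey, Nat.mul_add_mod, Nat.mod_eq_of_lt hlt]

lemma delta_eval' (q ℓ t x w v : ℕ) (hq : 2 ≤ q) (ht1 : 1 ≤ t) (htl : t < ℓ)
    (hx : x ≤ q^ℓ - 1) (hxe : x = q^t * w + v) (hv : v < q^t) :
    (delta q ℓ)^[ℓ - t] x = q^(ℓ-t) * v + w := by
  have hA : 2 ≤ q^t := le_trans hq (Nat.le_self_pow (by omega) q)
  have hC : 2 ≤ q^(ℓ-t) := le_trans hq (Nat.le_self_pow (by omega) q)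
  have hAC : q^t * q^(ℓ-t) = q^ℓ := by rw [← pow_add]; congr 1; omega
  rw [delta_iter' q ℓ (ℓ-t) x hq (by omega) hx]
  rw [← hAC] at hx ⊢
  exact delta_core' (q^t) (q^(ℓ-t)) x w v hA hC hx hxe hv

/-- For `u ∈ L(D, q^ℓ, b_ℓ)`, `1 ≤ t ≤ ℓ-1` and `uᵢ = q^t wᵢ + vᵢ` with `0 ≤ vᵢ < q^t`,
one has `∑ vᵢ dᵢ + b_t = q^t·Φ_u(-t) − Φ_u(0)` and
`∑ wᵢ dᵢ + b_{ℓ-t} = q^{ℓ-t}·Φ_u(0) − Φ_u(-t)`. -/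
theorem stmt11 (p f m n : ℕ) (hp : p.Prime) (hf : 1 ≤ f) (hm : 1 ≤ m) (hn : 1 ≤ n)
    (q : ℕ) (hq : q = p ^ f)
    (d : Fin n → Fin m → ℤ) (b : Fin m → ℤ) (hb : ∀ j, 0 ≤ b j ∧ b j ≤ (q : ℤ) - 2)
    (ℓ : ℕ) (hℓ : 1 ≤ ℓ) (u : Fin n → ℕ) (hu : u ∈ Lset q ℓ d b)
    (t : ℕ) (ht1 : 1 ≤ t) (ht2 : t ≤ ℓ - 1)
    (v w : Fin n → ℕ) (hvw : ∀ i, u i = q ^ t * w i + v i ∧ v i < q ^ t) :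
    (∀ j, ∑ i, (v i : ℤ) * d i j + ((q : ℤ) ^ t - 1) / ((q : ℤ) - 1) * b j
        = (q : ℤ) ^ t * phi q ℓ d b (fun i => (delta q ℓ)^[ℓ - t] (u i)) j
          - phi q ℓ d b u j) ∧
    (∀ j, ∑ i, (w i : ℤ) * d i j + ((q : ℤ) ^ (ℓ - t) - 1) / ((q : ℤ) - 1) * b j
        = (q : ℤ) ^ (ℓ - t) * phi q ℓ d b u j
          - phi q ℓ d b (fun i => (delta q ℓ)^[ℓ - t] (u i)) j) := by
  obtain ⟨hu1, hu2⟩ := hu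
  have hq2 : 2 ≤ q := by
    subst hq
    exact le_trans hp.two_le (Nat.le_self_pow (by omega) p)
  have htl : t < ℓ := by omega
  have hqZ : (2:ℤ) ≤ (q:ℤ) := by exact_mod_cast hq2
  have hql : (2:ℤ) ≤ (q:ℤ)^ℓ := by
    calc (2:ℤ) ≤ (q:ℤ) := hqZ
    _ = (q:ℤ)^1 := (pow_one _).symm
    _ ≤ (q:ℤ)^ℓ := pow_le_pow_right₀ (by linarith) hℓ
  have hN0 : ((q:ℤ)^ℓ - 1) ≠ 0 := by omega
  have hpow : (q:ℤ)^t * (q:ℤ)^(ℓ-t) = (q:ℤ)^ℓ := by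
    rw [← pow_add]; congr 1; omega
  -- delta evaluation
  have hdel : ∀ i, (((delta q ℓ)^[ℓ - t] (u i) : ℕ) : ℤ) = (q:ℤ)^(ℓ-t) * v i + w i := by
    intro i
    rw [delta_eval' q ℓ t (u i) (w i) (v i) hq2 ht1 htl (hu1 i) (hvw i).1 (hvw i).2]
    push_cast
    ring
  have hu_cast : ∀ i, (u i : ℤ) = (q:ℤ)^t * w i + v i := by
    intro i
    have := (hvw i).1
    exact_mod_cast congrArg (Nat.cast : ℕ → ℤ) this
  set B : ℤ := ((q:ℤ)^ℓ - 1) / ((q:ℤ) - 1) with hBdef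
  have hB : B = ∑ i ∈ Finset.range ℓ, (q:ℤ)^i := geom_div' q hq2 ℓ
  -- key identities
  have hgt : ((q:ℤ)^t - 1) * B = ((q:ℤ)^ℓ - 1) * ∑ i ∈ Finset.range t, (q:ℤ)^i := by
    rw [hB]; exact key_geom' (q:ℤ) t ℓ
  have hgs : ((q:ℤ)^(ℓ-t) - 1) * B = ((q:ℤ)^ℓ - 1) * ∑ i ∈ Finset.range (ℓ-t), (q:ℤ)^i := by
    rw [hB]; exact key_geom' (q:ℤ) (ℓ-t) ℓ
  have keyA : ∀ j, (q:ℤ)^t * (∑ i, (((delta q ℓ)^[ℓ - t] (u i) : ℕ) : ℤ) * d i j + B * b j)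
      - (∑ i, (u i : ℤ) * d i j + B * b j)
      = ((q:ℤ)^ℓ - 1) * (∑ i, (v i : ℤ) * d i j + (∑ k ∈ Finset.range t, (q:ℤ)^k) * b j) := by
    intro j
    simp only [hdel, hu_cast]
    have hsum : ∑ i, ((q:ℤ)^t * (((q:ℤ)^(ℓ-t) * v i + w i) * d i j)
        - ((q:ℤ)^t * w i + v i) * d i j)
        = ∑ i, ((q:ℤ)^ℓ - 1) * ((v i : ℤ) * d i j) :=
      Finset.sum_congr rfl (fun i _ => by linear_combination ((v i : ℤ) * d i j) * hpow)
    rw [Finset.sum_sub_distrib, ← Finset.mul_sum, ← Finset.mul_sum] at hsum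
    linear_combination hsum + b j * hgt
  have keyB : ∀ j, (q:ℤ)^(ℓ-t) * (∑ i, (u i : ℤ) * d i j + B * b j)
      - (∑ i, (((delta q ℓ)^[ℓ - t] (u i) : ℕ) : ℤ) * d i j + B * b j)
      = ((q:ℤ)^ℓ - 1) * (∑ i, (w i : ℤ) * d i j + (∑ k ∈ Finset.range (ℓ-t), (q:ℤ)^k) * b j) := by
    intro j
    simp only [hdel, hu_cast]
    have hsum : ∑ i, ((q:ℤ)^(ℓ-t) * (((q:ℤ)^t * w i + v i) * d i j)
        - ((q:ℤ)^(ℓ-t) * v i + w i) * d i j)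
        = ∑ i, ((q:ℤ)^ℓ - 1) * ((w i : ℤ) * d i j) :=
      Finset.sum_congr rfl (fun i _ => by linear_combination ((w i : ℤ) * d i j) * hpow)
    rw [Finset.sum_sub_distrib, ← Finset.mul_sum, ← Finset.mul_sum] at hsum
    linear_combination hsum + b j * hgs
  -- divisibility and phi values
  have main : ∀ j,
      (∑ i, (v i : ℤ) * d i j + ((q : ℤ) ^ t - 1) / ((q : ℤ) - 1) * b j
        = (q : ℤ) ^ t * phi q ℓ d b (fun i => (delta q ℓ)^[ℓ - t] (u i)) j
          - phi q ℓ d b u j) ∧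
      (∑ i, (w i : ℤ) * d i j + ((q : ℤ) ^ (ℓ - t) - 1) / ((q : ℤ) - 1) * b j
        = (q : ℤ) ^ (ℓ - t) * phi q ℓ d b u j
          - phi q ℓ d b (fun i => (delta q ℓ)^[ℓ - t] (u i)) j) := by
    intro j
    obtain ⟨Φ, hΦ⟩ := hu2 j
    have hS'dvd : ((q:ℤ)^ℓ - 1) ∣
        (∑ i, (((delta q ℓ)^[ℓ - t] (u i) : ℕ) : ℤ) * d i j + B * b j) := by
      refine ⟨(q:ℤ)^(ℓ-t) * Φ - (∑ i, (w i : ℤ) * d i j + (∑ k ∈ Finset.range (ℓ-t), (q:ℤ)^k) * b j), ?_⟩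
      linear_combination (q:ℤ)^(ℓ-t) * hΦ - keyB j
    obtain ⟨Φ', hΦ'⟩ := hS'dvd
    have hphiu : phi q ℓ d b u j = Φ := by
      show (∑ i, (u i : ℤ) * d i j + B * b j) / ((q:ℤ)^ℓ - 1) = Φ
      rw [hΦ, Int.mul_ediv_cancel_left _ hN0]
    have hphiu' : phi q ℓ d b (fun i => (delta q ℓ)^[ℓ - t] (u i)) j = Φ' := by
      show (∑ i, (((delta q ℓ)^[ℓ - t] (u i) : ℕ) : ℤ) * d i j + B * b j) / ((q:ℤ)^ℓ - 1) = Φ'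
      rw [hΦ', Int.mul_ediv_cancel_left _ hN0]
    rw [hphiu, hphiu', geom_div' q hq2 t, geom_div' q hq2 (ℓ-t)]
    constructor
    · apply mul_left_cancel₀ hN0
      linear_combination (q:ℤ)^t * hΦ' - hΦ - keyA j
    · apply mul_left_cancel₀ hN0
      linear_combination (q:ℤ)^(ℓ-t) * hΦ - hΦ' - keyB j
  exact ⟨fun j => (main j).1, fun j => (main j).2⟩
end

section
/- Let ℓ ≥ 2, u ∈ L(D, q^ℓ, b_ℓ), and let 1 ≤ t ≤ ℓ−1 be such that Φ_u(0) = Φ_u(t). Write u_i = q^{ℓ−t}·w_i + v_i with 0 ≤ v_i < q^{ℓ−t} for each i. Then v = (v_1, …, v_n) ∈ L(D, q^{ℓ−t}, b_{ℓ−t}), w = (w_1, …, w_n) ∈ L(D, q^t, b_t), and σ_p(u) = σ_p(v) + σ_p(w). -/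
open Finset

/-- `σ_p` of a tuple: the sum over the coordinates of the base-`p` digit sums. -/
def sigmaTuple (p : ℕ) {n : ℕ} (u : Fin n → ℕ) : ℕ :=
  ∑ i, (Nat.digits p (u i)).sum

/-- Iterating `delta` on a non-maximal element multiplies by `q^t` mod `q^ℓ-1`. -/
lemma delta_iter_aux (q ℓ t x : ℕ) (hq : 2 ≤ q) (hℓ : 1 ≤ ℓ) (hx : x < q ^ ℓ - 1) :
    (delta q ℓ)^[t] x = (q ^ t * x) % (q ^ ℓ - 1) := by
  have hql : 2 ≤ q ^ ℓ := le_trans hq (Nat.le_self_pow (by omega) q)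
  induction t with
  | zero => simpa using (Nat.mod_eq_of_lt (by omega)).symm
  | succ t ih =>
    rw [Function.iterate_succ_apply', ih, delta]
    have hlt : (q ^ t * x) % (q ^ ℓ - 1) < q ^ ℓ - 1 := Nat.mod_lt _ (by omega)
    rw [if_neg (by omega)]
    conv_rhs => rw [pow_succ, mul_comm (q ^ t) q, mul_assoc]
    conv_lhs => rw [Nat.mul_mod, Nat.mod_mod_of_dvd _ dvd_rfl, ← Nat.mul_mod]

/-- Digit sums split along a base-power decomposition. -/
lemma sum_digits_split (p K V W : ℕ) (hp : 1 < p) (hv : V < p ^ K) :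
    (Nat.digits p (p ^ K * W + V)).sum = (Nat.digits p V).sum + (Nat.digits p W).sum := by
  rcases Nat.eq_zero_or_pos W with rfl | hw
  · simp
  · have hlen : (Nat.digits p V).length ≤ K := by
      rcases Nat.eq_zero_or_pos V with rfl | hV
      · simp
      · rw [Nat.digits_len p V hp (by omega)]
        have := (Nat.log_lt_iff_lt_pow hp (by omega : V ≠ 0)).2 hv
        omega
    have h := Nat.digits_append_zeroes_append_digits
      (b := p) (k := K - (Nat.digits p V).length) (m := W) (n := V) hp hw
    rw [show (Nat.digits p V).length + (K - (Nat.digits p V).length) = K by omega] at h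
    rw [show p ^ K * W + V = V + p ^ K * W by ring, ← h]
    simp [List.sum_append]

/-- If `Φ_u(0) = Φ_u(t)` for some `1 ≤ t ≤ ℓ-1` and `uᵢ = q^{ℓ-t} wᵢ + vᵢ` with
`0 ≤ vᵢ < q^{ℓ-t}`, then `v ∈ L(D, q^{ℓ-t}, b_{ℓ-t})`, `w ∈ L(D, q^t, b_t)`, and
`σ_p(u) = σ_p(v) + σ_p(w)`. -/
theorem stmt12 (p f m n : ℕ) (hp : p.Prime) (hf : 1 ≤ f) (hm : 1 ≤ m) (hn : 1 ≤ n)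
    (q : ℕ) (hq : q = p ^ f)
    (d : Fin n → Fin m → ℤ) (b : Fin m → ℤ) (hb : ∀ j, 0 ≤ b j ∧ b j ≤ (q : ℤ) - 2)
    (ℓ : ℕ) (hℓ : 2 ≤ ℓ) (u : Fin n → ℕ) (hu : u ∈ Lset q ℓ d b)
    (t : ℕ) (ht1 : 1 ≤ t) (ht2 : t ≤ ℓ - 1)
    (hΦ : phi q ℓ d b u = phi q ℓ d b (fun i => (delta q ℓ)^[t] (u i)))
    (v w : Fin n → ℕ) (hvw : ∀ i, u i = q ^ (ℓ - t) * w i + v i ∧ v i < q ^ (ℓ - t)) :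
    v ∈ Lset q (ℓ - t) d b ∧ w ∈ Lset q t d b ∧
      sigmaTuple p u = sigmaTuple p v + sigmaTuple p w := by
  obtain ⟨hub, hud⟩ := hu
  have hq2 : 2 ≤ q := by
    rw [hq]
    calc 2 ≤ p := hp.two_le
    _ ≤ p ^ f := Nat.le_self_pow (by omega) p
  set s := ℓ - t with hsdef
  have hst : s + t = ℓ := by omega
  have hs1 : 1 ≤ s := by omega
  have hqs1 : 1 ≤ q ^ s := Nat.one_le_pow _ _ (by omega)
  have hqt2 : 2 ≤ q ^ t := le_trans hq2 (Nat.le_self_pow (by omega) q)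
  have hqs2 : 2 ≤ q ^ s := le_trans hq2 (Nat.le_self_pow (by omega) q)
  have hqst : q ^ s * q ^ t = q ^ ℓ := by rw [← pow_add, hst]
  have hql2 : 2 ≤ q ^ ℓ := le_trans hq2 (Nat.le_self_pow (by omega) q)
  -- representations of q^ℓ - 1
  have hrep : q ^ ℓ - 1 = q ^ s * (q ^ t - 1) + (q ^ s - 1) := by
    have e1 : q ^ s * (q ^ t - 1) = q ^ ℓ - q ^ s := by
      rw [Nat.mul_sub, mul_one, hqst]
    have : q ^ s ≤ q ^ ℓ := by rw [← hqst]; exact Nat.le_mul_of_pos_right _ (by omega)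
    omega
  have hrep' : q ^ t * (q ^ s - 1) + (q ^ t - 1) = q ^ ℓ - 1 := by
    have e1 : q ^ t * (q ^ s - 1) = q ^ ℓ - q ^ t := by
      rw [Nat.mul_sub, mul_one, mul_comm, hqst]
    have : q ^ t ≤ q ^ ℓ := by rw [← hqst]; exact Nat.le_mul_of_pos_left _ (by omega)
    omega
  -- bounds
  have hvb : ∀ i, v i ≤ q ^ s - 1 := fun i => by have := (hvw i).2; omega
  have hwb : ∀ i, w i ≤ q ^ t - 1 := by
    intro i
    by_contra h
    have h1 : q ^ t ≤ w i := by omega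
    have h2 : q ^ ℓ ≤ q ^ s * w i := by
      rw [← hqst]; exact Nat.mul_le_mul_left _ h1
    have h3 : q ^ s * w i ≤ u i := by rw [(hvw i).1]; exact Nat.le_add_right _ _
    have := hub i
    omega
  -- delta iterates
  have hdel : ∀ i, (delta q ℓ)^[t] (u i) = q ^ t * v i + w i := by
    intro i
    obtain ⟨hui, hvi⟩ := hvw i
    have hvbi := hvb i
    have hwbi := hwb i
    by_cases hmax : u i = q ^ ℓ - 1
    · have hv' : v i = q ^ s - 1 := by
        have : u i % q ^ s = v i := by
          rw [hui, Nat.mul_add_mod, Nat.mod_eq_of_lt hvi]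
        rw [← this, hmax, hrep, Nat.mul_add_mod, Nat.mod_eq_of_lt (by omega)]
      have hw' : w i = q ^ t - 1 := by
        have : u i / q ^ s = w i := by
          rw [hui, Nat.mul_add_div (by omega), Nat.div_eq_of_lt hvi, add_zero]
        rw [← this, hmax, hrep, Nat.mul_add_div (by omega),
          Nat.div_eq_of_lt (by omega), add_zero]
      have : (delta q ℓ)^[t] (u i) = q ^ ℓ - 1 := by
        rw [hmax]
        apply Function.iterate_fixed
        simp [delta]
      rw [this, hv', hw', ← hrep']
    · have hux : u i < q ^ ℓ - 1 := lt_of_le_of_ne (hub i) hmax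
      rw [delta_iter_aux q ℓ t (u i) hq2 (by omega) hux]
      have hle : q ^ t * v i + w i ≤ q ^ ℓ - 1 := by
        calc q ^ t * v i + w i ≤ q ^ t * (q ^ s - 1) + (q ^ t - 1) :=
              add_le_add (Nat.mul_le_mul_left _ (hvb i)) (hwb i)
        _ = q ^ ℓ - 1 := hrep'
      have hmaxlt : q ^ t * v i + w i < q ^ ℓ - 1 := by
        rcases lt_or_eq_of_le hle with h | h
        · exact h
        · exfalso
          have hv' : v i = q ^ s - 1 := by
            have e1 : (q ^ t * v i + w i) / q ^ t = v i := by
              rw [Nat.mul_add_div (by omega), Nat.div_eq_of_lt (by omega), add_zero]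
            have e2 : (q ^ ℓ - 1) / q ^ t = q ^ s - 1 := by
              rw [← hrep', Nat.mul_add_div (by omega), Nat.div_eq_of_lt (by omega), add_zero]
            rw [← e1, h, e2]
          have hw' : w i = q ^ t - 1 := by
            have e1 : (q ^ t * v i + w i) % q ^ t = w i := by
              rw [Nat.mul_add_mod, Nat.mod_eq_of_lt (by omega)]
            have e2 : (q ^ ℓ - 1) % q ^ t = q ^ t - 1 := by
              rw [← hrep', Nat.mul_add_mod, Nat.mod_eq_of_lt (by omega)]
            rw [← e1, h, e2]
          apply hmax
          rw [hui, hv', hw', ← hrep]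
      have hcalc : q ^ t * u i = (q ^ ℓ - 1) * w i + (q ^ t * v i + w i) := by
        rw [hui]
        have h1 : q ^ t * (q ^ s * w i) = q ^ ℓ * w i := by
          rw [← mul_assoc, mul_comm (q ^ t) (q ^ s), hqst]
        have h2 : q ^ ℓ * w i = (q ^ ℓ - 1) * w i + w i := by
          conv_lhs => rw [show q ^ ℓ = (q ^ ℓ - 1) + 1 by omega]
          ring
        rw [mul_add, h1, h2]; ring
      rw [hcalc, Nat.mul_add_mod, Nat.mod_eq_of_lt hmaxlt]
  -- integer setup
  have hq2z : (2 : ℤ) ≤ (q : ℤ) := by exact_mod_cast hq2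
  have hq1z : ((q : ℤ) - 1) ≠ 0 := by omega
  have hCd : ∀ r : ℕ, ((q : ℤ) ^ r - 1) / ((q : ℤ) - 1) = ∑ i ∈ Finset.range r, (q : ℤ) ^ i := by
    intro r
    rw [← geom_sum_mul, mul_comm, Int.mul_ediv_cancel_left _ hq1z]
  have hNz : ((q : ℤ) ^ ℓ - 1) ≠ 0 := by
    have : (2 : ℕ) ≤ q ^ ℓ := hql2
    have : (2 : ℤ) ≤ (q : ℤ) ^ ℓ := by exact_mod_cast this
    omega
  have hCsplit : (∑ i ∈ Finset.range ℓ, (q : ℤ) ^ i) =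
      (∑ i ∈ Finset.range s, (q : ℤ) ^ i) + (q : ℤ) ^ s * ∑ i ∈ Finset.range t, (q : ℤ) ^ i := by
    rw [← hst, Finset.sum_range_add, Finset.mul_sum]
    congr 1
    exact Finset.sum_congr rfl fun i _ => by rw [pow_add]
  have hqlz : ((q : ℤ)) ^ ℓ = (q : ℤ) ^ s * (q : ℤ) ^ t := by rw [← pow_add, hst]
  -- the key divisibility computation
  have key : ∀ j, ∃ k : ℤ,
      (∑ i, (v i : ℤ) * d i j) + (∑ i ∈ Finset.range s, (q : ℤ) ^ i) * b j
        = ((q : ℤ) ^ s - 1) * k ∧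
      (∑ i, (w i : ℤ) * d i j) + (∑ i ∈ Finset.range t, (q : ℤ) ^ i) * b j
        = ((q : ℤ) ^ t - 1) * k := by
    intro j
    have hdiv := hud j
    rw [hCd ℓ] at hdiv
    obtain ⟨k, hk⟩ := hdiv
    have hphi := congrFun hΦ j
    simp only [phi] at hphi
    rw [hCd ℓ] at hphi
    set A := ∑ i, (v i : ℤ) * d i j with hA
    set B := ∑ i, (w i : ℤ) * d i j with hB
    set Cs := ∑ i ∈ Finset.range s, (q : ℤ) ^ i with hCs
    set Ct := ∑ i ∈ Finset.range t, (q : ℤ) ^ i with hCt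
    have hS : (∑ i, (u i : ℤ) * d i j) = (q : ℤ) ^ s * B + A := by
      rw [hB, hA, Finset.mul_sum, ← Finset.sum_add_distrib]
      apply Finset.sum_congr rfl
      intro i _
      have h1 : ((u i : ℤ)) = (q : ℤ) ^ s * (w i : ℤ) + (v i : ℤ) := by
        have := (hvw i).1
        push_cast [this]
        ring
      rw [h1]; ring
    have hS' : (∑ i, (((delta q ℓ)^[t] (u i) : ℕ) : ℤ) * d i j) = (q : ℤ) ^ t * A + B := by
      rw [hA, hB, Finset.mul_sum, ← Finset.sum_add_distrib]
      apply Finset.sum_congr rfl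
      intro i _
      have h1 : ((((delta q ℓ)^[t] (u i) : ℕ)) : ℤ) = (q : ℤ) ^ t * (v i : ℤ) + (w i : ℤ) := by
        rw [hdel i]
        push_cast
        ring
      rw [h1]; ring
    rw [hS, hCsplit] at hk
    have hCtm : ((q : ℤ) - 1) * Ct = (q : ℤ) ^ t - 1 := by rw [hCt, mul_comm, geom_sum_mul]
    have hClm : ((q : ℤ) - 1) * (Cs + (q : ℤ) ^ s * Ct) = (q : ℤ) ^ ℓ - 1 := by
      rw [← hCsplit, mul_comm, geom_sum_mul]
    have hI : ((q : ℤ) ^ t - 1) * (Cs + (q : ℤ) ^ s * Ct) = ((q : ℤ) ^ ℓ - 1) * Ct := by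
      apply mul_left_cancel₀ hq1z
      calc ((q : ℤ) - 1) * (((q : ℤ) ^ t - 1) * (Cs + (q : ℤ) ^ s * Ct))
          = ((q : ℤ) ^ t - 1) * (((q : ℤ) - 1) * (Cs + (q : ℤ) ^ s * Ct)) := by ring
      _ = ((q : ℤ) ^ t - 1) * ((q : ℤ) ^ ℓ - 1) := by rw [hClm]
      _ = ((q : ℤ) ^ ℓ - 1) * (((q : ℤ) - 1) * Ct) := by rw [hCtm]; ring
      _ = ((q : ℤ) - 1) * (((q : ℤ) ^ ℓ - 1) * Ct) := by ring
    have hnum' : (∑ i, (((delta q ℓ)^[t] (u i) : ℕ) : ℤ) * d i j) +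
        (∑ i ∈ Finset.range ℓ, (q : ℤ) ^ i) * b j
        = ((q : ℤ) ^ ℓ - 1) * ((q : ℤ) ^ t * k - (B + Ct * b j)) := by
      rw [hS', hCsplit]
      linear_combination (q : ℤ) ^ t * hk - b j * hI + B * hqlz
    have hL : ((∑ i, (u i : ℤ) * d i j) +
        (∑ i ∈ Finset.range ℓ, (q : ℤ) ^ i) * b j) / ((q : ℤ) ^ ℓ - 1) = k := by
      rw [hS, hCsplit, hk, Int.mul_ediv_cancel_left _ hNz]
    have hR : ((∑ i, (((delta q ℓ)^[t] (u i) : ℕ) : ℤ) * d i j) +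
        (∑ i ∈ Finset.range ℓ, (q : ℤ) ^ i) * b j) / ((q : ℤ) ^ ℓ - 1)
        = (q : ℤ) ^ t * k - (B + Ct * b j) := by
      rw [hnum', Int.mul_ediv_cancel_left _ hNz]
    have hkk : k = (q : ℤ) ^ t * k - (B + Ct * b j) := by
      have h := hphi
      rw [hL, hR] at h
      exact h
    refine ⟨k, ?_, ?_⟩
    · linear_combination hk - (q : ℤ) ^ s * hkk + k * hqlz
    · linear_combination hkk
  refine ⟨⟨hvb, fun j => ?_⟩, ⟨hwb, fun j => ?_⟩, ?_⟩
  · obtain ⟨k, h1, _⟩ := key j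
    rw [hCd s]
    exact ⟨k, h1⟩
  · obtain ⟨k, _, h2⟩ := key j
    rw [hCd t]
    exact ⟨k, h2⟩
  · unfold sigmaTuple
    rw [← Finset.sum_add_distrib]
    apply Finset.sum_congr rfl
    intro i _
    have hui := (hvw i).1
    have hvi := (hvw i).2
    rw [hui]
    have hqs : q ^ s = p ^ (f * s) := by rw [hq, ← pow_mul]
    rw [hqs] at hvi ⊢
    exact sum_digits_split p (f * s) (v i) (w i) hp.one_lt hvi
end

section
/- Suppose m = 1, each d_i is a positive integer, and b ≠ 0 (so 1 ≤ b ≤ q−2). Then for every integer ℓ ≥ 1 and every u ∈ L(D, q^ℓ, b_ℓ), one has σ_p(u)·max_{1≤i≤n} σ_p(d_i) ≥ ℓ·(f(p−1) − σ_p(b)); equivalently σ_p(u) ≥ ℓ·(f(p−1) − σ_p(b))/max_{1≤i≤n} σ_p(d_i). -/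
open Finset

private lemma sd_rec {p : ℕ} (hp : 2 ≤ p) (n : ℕ) :
    (Nat.digits p n).sum = n % p + (Nat.digits p (n / p)).sum := by
  rcases Nat.eq_zero_or_pos n with rfl | hn
  · simp
  · rw [Nat.digits_def' (by omega : 1 < p) hn, List.sum_cons]

private lemma sd_add_le_aux {p : ℕ} (hp : 2 ≤ p) :
    ∀ s a b : ℕ, a + b ≤ s →
      (Nat.digits p (a + b)).sum ≤ (Nat.digits p a).sum + (Nat.digits p b).sum := by
  intro s
  induction s with
  | zero => intro a b h; have : a = 0 := by omega
            have hb : b = 0 := by omega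
            subst this; subst hb; simp
  | succ s ih =>
    intro a b h
    rcases Nat.eq_zero_or_pos (a + b) with h0 | h0
    · have ha : a = 0 := by omega
      have hb : b = 0 := by omega
      subst ha; subst hb; simp
    · have hp0 : 0 < p := by omega
      obtain ⟨c, hc1, hcc, hmod, hdiv⟩ :
          ∃ c, c ≤ 1 ∧ c ≤ p * c ∧ (a + b) % p + p * c = a % p + b % p ∧
            (a + b) / p = a / p + b / p + c := by
        refine ⟨(a % p + b % p) / p, ?_, ?_, ?_, ?_⟩
        · have h1 := Nat.mod_lt a hp0
          have h2 := Nat.mod_lt b hp0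
          rw [Nat.div_le_iff_le_mul_add_pred hp0]; omega
        · calc (a % p + b % p) / p = 1 * ((a % p + b % p) / p) := (one_mul _).symm
            _ ≤ p * ((a % p + b % p) / p) := Nat.mul_le_mul_right _ (by omega)
        · have h1 : (a + b) % p = (a % p + b % p) % p := by rw [Nat.add_mod]
          have h2 := Nat.mod_add_div (a % p + b % p) p
          omega
        · apply Nat.eq_of_mul_eq_mul_left hp0
          have h5 : p * (a / p + b / p + (a % p + b % p) / p)
              = p * (a / p) + p * (b / p) + p * ((a % p + b % p) / p) := by ring
          rw [h5]
          have h1 := Nat.mod_add_div (a + b) p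
          have h2 := Nat.mod_add_div a p
          have h3 := Nat.mod_add_div b p
          have h4 : (a + b) % p = (a % p + b % p) % p := by rw [Nat.add_mod]
          have h6 := Nat.mod_add_div (a % p + b % p) p
          omega
      have hdlt : (a + b) / p < a + b := Nat.div_lt_self h0 (by omega)
      have key1 : (Nat.digits p (a / p + (b / p + c))).sum ≤
          (Nat.digits p (a / p)).sum + (Nat.digits p (b / p + c)).sum :=
        ih _ _ (by omega)
      have key2 : (Nat.digits p (b / p + c)).sum ≤
          (Nat.digits p (b / p)).sum + (Nat.digits p c).sum :=
        ih _ _ (le_trans (Nat.le_add_left _ _)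
          (by omega : a / p + (b / p + c) ≤ s))
      have hsdc : (Nat.digits p c).sum = c := by
        interval_cases c
        · simp
        · rw [sd_rec hp 1, Nat.mod_eq_of_lt (by omega), Nat.div_eq_of_lt (by omega)]; simp
      have e1 := sd_rec hp (a + b)
      have e2 := sd_rec hp a
      have e3 := sd_rec hp b
      have h7 : a / p + (b / p + c) = (a + b) / p := by omega
      rw [h7] at key1
      omega

private lemma sd_add_le {p : ℕ} (hp : 2 ≤ p) (a b : ℕ) :
    (Nat.digits p (a + b)).sum ≤ (Nat.digits p a).sum + (Nat.digits p b).sum :=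
  sd_add_le_aux hp (a + b) a b le_rfl

private lemma sd_nsmul_le {p : ℕ} (hp : 2 ≤ p) (c x : ℕ) :
    (Nat.digits p (c * x)).sum ≤ c * (Nat.digits p x).sum := by
  induction c with
  | zero => simp
  | succ c ih =>
    have : (c + 1) * x = c * x + x := by ring
    rw [this]
    calc (Nat.digits p (c * x + x)).sum
        ≤ (Nat.digits p (c * x)).sum + (Nat.digits p x).sum := sd_add_le hp _ _
      _ ≤ c * (Nat.digits p x).sum + (Nat.digits p x).sum := by omega
      _ = (c + 1) * (Nat.digits p x).sum := by ring

private lemma sd_p_mul {p : ℕ} (hp : 2 ≤ p) (m : ℕ) :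
    (Nat.digits p (p * m)).sum = (Nat.digits p m).sum := by
  rcases Nat.eq_zero_or_pos m with rfl | hm
  · simp
  · rw [sd_rec hp (p * m), Nat.mul_mod_right, Nat.mul_div_cancel_left _ (by omega : 0 < p)]
    omega

private lemma sd_mul_le_aux {p : ℕ} (hp : 2 ≤ p) :
    ∀ s n x : ℕ, n ≤ s →
      (Nat.digits p (n * x)).sum ≤ (Nat.digits p n).sum * (Nat.digits p x).sum := by
  intro s
  induction s with
  | zero =>
    intro n x h
    obtain rfl : n = 0 := by omega
    simp
  | succ s ih =>
    intro n x h
    rcases Nat.eq_zero_or_pos n with rfl | hn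
    · simp
    · have hsplit : n * x = (n % p) * x + p * ((n / p) * x) := by
        have := Nat.mod_add_div n p
        calc n * x = (n % p + p * (n / p)) * x := by rw [this]
          _ = (n % p) * x + p * ((n / p) * x) := by ring
      have hlt : n / p < n := Nat.div_lt_self hn (by omega)
      calc (Nat.digits p (n * x)).sum
          ≤ (Nat.digits p ((n % p) * x)).sum + (Nat.digits p (p * ((n / p) * x))).sum := by
            rw [hsplit]; exact sd_add_le hp _ _
        _ = (Nat.digits p ((n % p) * x)).sum + (Nat.digits p ((n / p) * x)).sum := by
            rw [sd_p_mul hp]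
        _ ≤ (n % p) * (Nat.digits p x).sum + (Nat.digits p (n / p)).sum * (Nat.digits p x).sum := by
            have h1 := sd_nsmul_le hp (n % p) x
            have h2 := ih (n / p) x (by omega)
            omega
        _ = (n % p + (Nat.digits p (n / p)).sum) * (Nat.digits p x).sum := by ring
        _ = (Nat.digits p n).sum * (Nat.digits p x).sum := by rw [← sd_rec hp]

private lemma sd_mul_le {p : ℕ} (hp : 2 ≤ p) (a x : ℕ) :
    (Nat.digits p (a * x)).sum ≤ (Nat.digits p a).sum * (Nat.digits p x).sum :=
  sd_mul_le_aux hp a a x le_rfl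

private lemma sd_split {p : ℕ} (hp : 2 ≤ p) :
    ∀ m a b : ℕ, b < p ^ m →
      (Nat.digits p (a * p ^ m + b)).sum = (Nat.digits p a).sum + (Nat.digits p b).sum := by
  intro m
  induction m with
  | zero =>
    intro a b hb
    rw [pow_zero] at hb
    obtain rfl : b = 0 := by omega
    simp
  | succ m ih =>
    intro a b hb
    rcases Nat.eq_zero_or_pos a with rfl | ha
    · simp
    · have hn : a * p ^ (m + 1) + b = p * (a * p ^ m + b / p) + b % p := by
        have := Nat.mod_add_div b p
        calc a * p ^ (m + 1) + b = a * (p ^ m * p) + (b % p + p * (b / p)) := by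
              rw [pow_succ]; omega
          _ = p * (a * p ^ m + b / p) + b % p := by ring
      have hbp : b % p < p := Nat.mod_lt _ (by omega)
      have hpos : 0 < a * p ^ (m + 1) + b := by
        have : 0 < p ^ (m + 1) := pow_pos (by omega) _
        nlinarith
      rw [sd_rec hp (a * p ^ (m + 1) + b)]
      have hmod : (a * p ^ (m + 1) + b) % p = b % p := by
        rw [hn, Nat.mul_add_mod, Nat.mod_eq_of_lt hbp]
      have hdiv : (a * p ^ (m + 1) + b) / p = a * p ^ m + b / p := by
        rw [hn, Nat.mul_add_div (by omega : 0 < p), Nat.div_eq_of_lt hbp, add_zero]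
      have hblt : b / p < p ^ m := by
        rw [Nat.div_lt_iff_lt_mul (by omega : 0 < p)]
        calc b < p ^ (m + 1) := hb
          _ = p ^ m * p := pow_succ p m
      rw [hmod, hdiv, ih a (b / p) hblt, sd_rec hp b]
      omega

private lemma sd_repunit {p : ℕ} (hp : 2 ≤ p) :
    ∀ m : ℕ, (Nat.digits p (p ^ m - 1)).sum = m * (p - 1) := by
  intro m
  induction m with
  | zero => simp
  | succ m ih =>
    have hP : 1 ≤ p ^ m := Nat.one_le_pow _ _ (by omega)
    have heq : p ^ (m + 1) - 1 = (p ^ m - 1) * p ^ 1 + (p - 1) := by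
      have h1 : p ^ (m + 1) = p ^ m * p := pow_succ p m
      have h2 : (p ^ m - 1) * p ^ 1 = p ^ m * p - p := by
        rw [pow_one, Nat.sub_mul, one_mul]
      have h3 : p ≤ p ^ m * p := Nat.le_mul_of_pos_left p hP
      omega
    rw [heq, sd_split hp 1 _ _ (by simpa using by omega : p - 1 < p ^ 1)]
    have hd1 : (Nat.digits p (p - 1)).sum = p - 1 := by
      rw [sd_rec hp (p - 1), Nat.mod_eq_of_lt (by omega), Nat.div_eq_of_lt (by omega)]
      simp
    rw [ih, hd1]; ring

private lemma sd_multiple_aux {p m : ℕ} (hp : 2 ≤ p) (hm : 1 ≤ m) :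
    ∀ s N : ℕ, N ≤ s → 0 < N → (p ^ m - 1) ∣ N → m * (p - 1) ≤ (Nat.digits p N).sum := by
  intro s
  induction s with
  | zero => intro N h h0 _; omega
  | succ s ih =>
    intro N hNs hN0 hdvd
    have hP2 : 2 ≤ p ^ m := by
      calc 2 ≤ p := hp
        _ = p ^ 1 := (pow_one p).symm
        _ ≤ p ^ m := Nat.pow_le_pow_right (by omega) hm
    rcases lt_or_ge N (p ^ m) with hlt | hge
    · have hle : p ^ m - 1 ≤ N := Nat.le_of_dvd hN0 hdvd
      have : N = p ^ m - 1 := by omega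
      rw [this, sd_repunit hp]
    · obtain ⟨A, B, hAB, hBlt⟩ : ∃ A B, A * p ^ m + B = N ∧ B < p ^ m :=
        ⟨N / p ^ m, N % p ^ m, by rw [mul_comm]; exact Nat.div_add_mod N (p ^ m),
          Nat.mod_lt _ (by omega)⟩
      have hA1 : 1 ≤ A := by
        rcases Nat.eq_zero_or_pos A with rfl | h
        · simp at hAB; omega
        · exact h
      have hAsub : A * p ^ m = A * (p ^ m - 1) + A := by
        obtain ⟨k, hk⟩ : ∃ k, p ^ m = k + 2 := ⟨p ^ m - 2, by omega⟩
        rw [hk]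
        have h2 : k + 2 - 1 = k + 1 := rfl
        rw [h2]; ring
      have h1 : N = A * (p ^ m - 1) + (A + B) := by omega
      have hdvd2 : (p ^ m - 1) ∣ (A + B) := by
        have h2 : A + B = N - A * (p ^ m - 1) := by omega
        rw [h2]
        exact Nat.dvd_sub hdvd (dvd_mul_left _ A)
      have hg1 : 1 ≤ A * (p ^ m - 1) := by
        have := Nat.mul_le_mul hA1 (show 1 ≤ p ^ m - 1 by omega)
        simpa using this
      have hABlt : A + B < N := by omega
      have hIH := ih (A + B) (by omega) (by omega) hdvd2
      calc m * (p - 1) ≤ (Nat.digits p (A + B)).sum := hIH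
        _ ≤ (Nat.digits p A).sum + (Nat.digits p B).sum := sd_add_le hp A B
        _ = (Nat.digits p (A * p ^ m + B)).sum := (sd_split hp m A B hBlt).symm
        _ = (Nat.digits p N).sum := by rw [hAB]

private lemma sd_pow {p : ℕ} (hp : 2 ≤ p) (k : ℕ) : (Nat.digits p (p ^ k)).sum = 1 := by
  induction k with
  | zero =>
    rw [pow_zero, sd_rec hp 1, Nat.mod_eq_of_lt (by omega), Nat.div_eq_of_lt (by omega)]
    simp
  | succ k ih => rw [pow_succ, mul_comm, sd_p_mul hp]; exact ih

private lemma sd_finsum_le {p : ℕ} (hp : 2 ≤ p) {α : Type*} (s : Finset α) (x : α → ℕ) :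
    (Nat.digits p (∑ i ∈ s, x i)).sum ≤ ∑ i ∈ s, (Nat.digits p (x i)).sum := by
  induction s using Finset.cons_induction with
  | empty => simp
  | cons a s ha ih =>
    rw [Finset.sum_cons, Finset.sum_cons]
    calc (Nat.digits p (x a + ∑ i ∈ s, x i)).sum
        ≤ (Nat.digits p (x a)).sum + (Nat.digits p (∑ i ∈ s, x i)).sum := sd_add_le hp _ _
      _ ≤ _ := by omega

private lemma geom_sum_nat {q : ℕ} (hq : 2 ≤ q) (ℓ : ℕ) :
    (q - 1) * ∑ j ∈ Finset.range ℓ, q ^ j = q ^ ℓ - 1 := by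
  induction ℓ with
  | zero => simp
  | succ ℓ ih =>
    rw [Finset.sum_range_succ, Nat.mul_add, ih]
    have hQ : 1 ≤ q ^ ℓ := Nat.one_le_pow _ _ (by omega)
    have h1 : (q - 1) * q ^ ℓ = q * q ^ ℓ - q ^ ℓ := by rw [Nat.sub_mul, one_mul]
    have h2 : q ^ (ℓ + 1) = q * q ^ ℓ := by rw [pow_succ]; ring
    have h3 : q ^ ℓ ≤ q * q ^ ℓ := Nat.le_mul_of_pos_left _ (by omega)
    omega


/-- For `m = 1`, positive exponents `dᵢ` and `b ≠ 0`, every `u ∈ L(D, q^ℓ, b_ℓ)`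
satisfies `σ_p(u)·maxᵢ σ_p(dᵢ) ≥ ℓ·(f(p−1) − σ_p(b))`. -/
theorem stmt14 (p f n : ℕ) (hp : p.Prime) (hf : 1 ≤ f) (hn : 1 ≤ n)
    (q : ℕ) (hq : q = p ^ f)
    (d : Fin n → ℕ) (hd : ∀ i, 0 < d i)
    (b : ℕ) (hb : b ≤ q - 2) (hb0 : b ≠ 0)
    (ℓ : ℕ) (hℓ : 1 ≤ ℓ) (u : Fin n → ℕ)
    (hu1 : ∀ i, u i ≤ q ^ ℓ - 1)
    (hu2 : (q ^ ℓ - 1) ∣ (∑ i, u i * d i + (q ^ ℓ - 1) / (q - 1) * b)) :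
    (ℓ : ℤ) * ((f : ℤ) * ((p : ℤ) - 1) - ((Nat.digits p b).sum : ℤ))
      ≤ (∑ i, ((Nat.digits p (u i)).sum : ℤ))
        * ((Finset.univ.sup (fun i => (Nat.digits p (d i)).sum) : ℕ) : ℤ) := by
  have hp2 : 2 ≤ p := hp.two_le
  have hq2 : 2 ≤ q := by
    rw [hq]
    calc 2 ≤ p := hp2
      _ = p ^ 1 := (pow_one p).symm
      _ ≤ p ^ f := Nat.pow_le_pow_right (by omega) hf
  have hqp : q ^ ℓ = p ^ (f * ℓ) := by rw [hq, ← pow_mul]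
  have hgeom := geom_sum_nat hq2 ℓ
  have hr : (q ^ ℓ - 1) / (q - 1) = ∑ j ∈ Finset.range ℓ, q ^ j := by
    rw [← hgeom, Nat.mul_div_cancel_left _ (by omega : 0 < q - 1)]
  have hrpos : 0 < ∑ j ∈ Finset.range ℓ, q ^ j :=
    Finset.sum_pos (fun j _ => pow_pos (by omega) j)
      (Finset.nonempty_range_iff.mpr (by omega))
  set M := Finset.univ.sup (fun i => (Nat.digits p (d i)).sum) with hM
  have hMle : ∀ i, (Nat.digits p (d i)).sum ≤ M := fun i =>
    Finset.le_sup (f := fun i => (Nat.digits p (d i)).sum) (Finset.mem_univ i)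
  set N := ∑ i, u i * d i + (q ^ ℓ - 1) / (q - 1) * b with hN
  have hN0 : 0 < N := by
    have h1 : 1 * 1 ≤ (q ^ ℓ - 1) / (q - 1) * b := by
      rw [hr]; exact Nat.mul_le_mul hrpos (by omega)
    rw [hN]; omega
  have hm1 : 1 ≤ f * ℓ := by
    calc 1 = 1 * 1 := rfl
      _ ≤ f * ℓ := Nat.mul_le_mul hf hℓ
  have hdvdN : (p ^ (f * ℓ) - 1) ∣ N := by rw [← hqp]; exact hu2
  have hlow : (f * ℓ) * (p - 1) ≤ (Nat.digits p N).sum :=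
    sd_multiple_aux hp2 hm1 N N le_rfl hN0 hdvdN
  have hsdr : (Nat.digits p ((q ^ ℓ - 1) / (q - 1))).sum ≤ ℓ := by
    rw [hr]
    calc (Nat.digits p (∑ j ∈ Finset.range ℓ, q ^ j)).sum
        ≤ ∑ j ∈ Finset.range ℓ, (Nat.digits p (q ^ j)).sum := sd_finsum_le hp2 _ _
      _ = ∑ j ∈ Finset.range ℓ, 1 := by
          refine Finset.sum_congr rfl fun j _ => ?_
          rw [hq, ← pow_mul, sd_pow hp2]
      _ = ℓ := by simp
  have hup : (Nat.digits p N).sum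
      ≤ (∑ i, (Nat.digits p (u i)).sum) * M + ℓ * (Nat.digits p b).sum := by
    calc (Nat.digits p N).sum
        ≤ (Nat.digits p (∑ i, u i * d i)).sum
            + (Nat.digits p ((q ^ ℓ - 1) / (q - 1) * b)).sum := sd_add_le hp2 _ _
      _ ≤ (∑ i, (Nat.digits p (u i * d i)).sum)
            + (Nat.digits p ((q ^ ℓ - 1) / (q - 1))).sum * (Nat.digits p b).sum := by
          have h1 := sd_finsum_le hp2 Finset.univ (fun i => u i * d i)
          have h2 := sd_mul_le hp2 ((q ^ ℓ - 1) / (q - 1)) b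
          omega
      _ ≤ (∑ i, (Nat.digits p (u i)).sum * M) + ℓ * (Nat.digits p b).sum := by
          apply Nat.add_le_add
          · refine Finset.sum_le_sum fun i _ => ?_
            exact le_trans (sd_mul_le hp2 _ _) (Nat.mul_le_mul_left _ (hMle i))
          · exact Nat.mul_le_mul_right _ hsdr
      _ = (∑ i, (Nat.digits p (u i)).sum) * M + ℓ * (Nat.digits p b).sum := by
          rw [Finset.sum_mul]
  have key : (f * ℓ) * (p - 1)
      ≤ (∑ i, (Nat.digits p (u i)).sum) * M + ℓ * (Nat.digits p b).sum :=
    le_trans hlow hup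
  have hp1 : (1 : ℕ) ≤ p := by omega
  zify [hp1] at key
  push_cast at key ⊢
  linarith
end

section
/- Let q = p (so f = 1), let d ≥ 1 and b ∈ {1, …, p−2} be integers with d dividing p−1−b, and set s = (p−1−b)/d and D = (1, 2, …, d). Then L(D, p, b) is nonempty, the tuple u = (0, …, 0, s) (with s in the last coordinate) belongs to L(D, p, b) with σ_p(u) = s, and σ(D, p, b) = min{ σ_p(u) : u ∈ L(D, p, b) } = s. -/
open Finset

lemma digsum_lt {p n : ℕ} (hp : 2 ≤ p) (h : n < p) : (Nat.digits p n).sum = n := by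
  rcases Nat.eq_zero_or_pos n with h0 | h0
  · simp [h0]
  · rw [Nat.digits_def' hp h0, Nat.mod_eq_of_lt h, Nat.div_eq_of_lt h]
    simp

/-- For `q = p`, `D = (1,…,d)`, `1 ≤ b ≤ p-2` with `d ∣ p-1-b` and `s = (p-1-b)/d`:
`L(D, p, b)` is nonempty, the tuple `(0,…,0,s)` lies in it with `σ_p`-weight `s`, and
`σ(D, p, b) = s`. -/
theorem stmt15 (p : ℕ) (hp : p.Prime) (d : ℕ) (hd : 1 ≤ d)
    (b : ℕ) (hb1 : 1 ≤ b) (hb2 : b ≤ p - 2)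
    (s : ℕ) (hs : p - 1 - b = d * s) :
    ({u : Fin d → ℕ | (∀ i, u i ≤ p - 1) ∧
        (p - 1) ∣ (∑ i, u i * ((i : ℕ) + 1) + b)}).Nonempty ∧
    (fun i : Fin d => if (i : ℕ) = d - 1 then s else 0) ∈
      {u : Fin d → ℕ | (∀ i, u i ≤ p - 1) ∧
        (p - 1) ∣ (∑ i, u i * ((i : ℕ) + 1) + b)} ∧
    sigmaTuple p (fun i : Fin d => if (i : ℕ) = d - 1 then s else 0) = s ∧
    sInf (sigmaTuple p '' {u : Fin d → ℕ | (∀ i, u i ≤ p - 1) ∧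
        (p - 1) ∣ (∑ i, u i * ((i : ℕ) + 1) + b)}) = s := by
  have hp2 : 2 ≤ p := hp.two_le
  have hp3 : 3 ≤ p := by omega
  have hss : s ≤ d * s := Nat.le_mul_of_pos_left s (by omega)
  have hsle : s ≤ p - 2 := by omega
  have hslt : s < p := by omega
  set i0 : Fin d := ⟨d - 1, by omega⟩ with hi0
  -- the key sum computation
  have key : ∑ i : Fin d, (if (i : ℕ) = d - 1 then s else 0) * ((i : ℕ) + 1) = s * d := by
    rw [Finset.sum_eq_single i0]
    · have h0 : (i0 : ℕ) = d - 1 := rfl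
      rw [h0, if_pos rfl, Nat.sub_add_cancel hd]
    · intro i _ hne
      have : (i : ℕ) ≠ d - 1 := fun h => hne (Fin.ext h)
      simp [this]
    · intro h; exact absurd (Finset.mem_univ _) h
  have hdvd : (p - 1) ∣ (∑ i : Fin d, (if (i : ℕ) = d - 1 then s else 0) * ((i : ℕ) + 1) + b) := by
    rw [key]
    have h1 : s * d + b = p - 1 := by rw [mul_comm]; omega
    rw [h1]
  have hmem : (fun i : Fin d => if (i : ℕ) = d - 1 then s else 0) ∈
      {u : Fin d → ℕ | (∀ i, u i ≤ p - 1) ∧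
        (p - 1) ∣ (∑ i, u i * ((i : ℕ) + 1) + b)} := by
    refine ⟨fun i => ?_, hdvd⟩
    show (if (i : ℕ) = d - 1 then s else 0) ≤ p - 1
    split <;> omega
  have key2 : sigmaTuple p (fun i : Fin d => if (i : ℕ) = d - 1 then s else 0) = s := by
    unfold sigmaTuple
    rw [Finset.sum_eq_single i0]
    · show (p.digits (if (i0 : ℕ) = d - 1 then s else 0)).sum = s
      rw [show (i0 : ℕ) = d - 1 from rfl, if_pos rfl]
      exact digsum_lt hp2 hslt
    · intro i _ hne
      have : (i : ℕ) ≠ d - 1 := fun h => hne (Fin.ext h)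
      simp [this]
    · intro h; exact absurd (Finset.mem_univ _) h
  refine ⟨⟨_, hmem⟩, hmem, key2, ?_⟩
  apply le_antisymm
  · exact Nat.sInf_le ⟨_, hmem, key2⟩
  · refine le_csInf ⟨s, _, hmem, key2⟩ ?_
    rintro x ⟨u, ⟨hub, hdv⟩, rfl⟩
    have hsum : sigmaTuple p u = ∑ i, u i :=
      Finset.sum_congr rfl fun i _ => digsum_lt hp2 (by have := hub i; omega)
    rw [hsum]
    have hpos : 0 < ∑ i, u i * ((i : ℕ) + 1) + b := by omega
    have hge : p - 1 ≤ ∑ i, u i * ((i : ℕ) + 1) + b := Nat.le_of_dvd hpos hdv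
    have h2 : ∑ i, u i * ((i : ℕ) + 1) ≤ ∑ i, u i * d :=
      Finset.sum_le_sum fun i _ => Nat.mul_le_mul_left _ (by have := i.isLt; omega)
    rw [← Finset.sum_mul] at h2
    have h3 : d * s ≤ ∑ i, u i * ((i : ℕ) + 1) := by rw [← hs]; omega
    have h4 : d * s ≤ d * ∑ i, u i := by
      rw [mul_comm d (∑ i, u i)] at *
      exact h3.trans h2
    exact Nat.le_of_mul_le_mul_left h4 (by omega)
end

section
/- Let K be a field of characteristic zero equipped with a nonarchimedean multiplicative absolute value ‖·‖. Let α_1, …, α_t and β_1, …, β_s be nonzero elements of K such that α_j ≠ β_i for all i, j. Let r > 0 be a real number and suppose that ‖Σ_{i=1}^s β_i^ℓ − Σ_{j=1}^t α_j^ℓ‖ ≤ r^ℓ for every integer ℓ ≥ 1. Then ‖α_j‖ ≤ r for every j and ‖β_i‖ ≤ r for every i. (This is the valuation bound μ(F, b) ≥ s_p(D, b) for the reciprocal zeros and poles of the L-function L(F, b, T) = ∏(1−β_i T)/∏(1−α_j T), given that v_q(S_ℓ(F, b)) ≥ ℓ·s_p(D, b) for the power sums S_ℓ(F, b) = Σ_j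 α_j^ℓ − Σ_i β_i^ℓ.) -/
open Finset

section Aux
open Polynomial

private lemma sum_le_of_na {K : Type*} [Field K] (v : AbsoluteValue K ℝ)
    (hna : ∀ x y : K, v (x + y) ≤ max (v x) (v y))
    {ι : Type*} (s : Finset ι) (f : ι → K) {b : ℝ} (hb : 0 ≤ b)
    (h : ∀ i ∈ s, v (f i) ≤ b) : v (∑ i ∈ s, f i) ≤ b := by
  classical
  induction s using Finset.induction_on with
  | empty => simpa using hb
  | @insert a s' hx ih =>
    rw [Finset.sum_insert hx]
    refine (hna _ _).trans (max_le (h a (by simp)) (ih fun i hi => h i (by simp [hi])))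

private lemma aux_key {K : Type*} [Field K] [CharZero K] (v : AbsoluteValue K ℝ)
    (hna : ∀ x y : K, v (x + y) ≤ max (v x) (v y))
    (s t : ℕ) (α : Fin t → K) (β : Fin s → K)
    (hβ : ∀ i, β i ≠ 0)
    (hαβ : ∀ i j, α j ≠ β i)
    (r : ℝ) (hr : 0 < r)
    (hbound : ∀ ℓ : ℕ, 1 ≤ ℓ → v (∑ i, β i ^ ℓ - ∑ j, α j ^ ℓ) ≤ r ^ ℓ)
    (i₀ : Fin s) :
    v (β i₀) ≤ r := by
  classical
  by_contra hM
  push_neg at hM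
  set c : K := β i₀ with hc
  set M : ℝ := v c with hMdef
  set F : Finset (Fin s) := Finset.univ.filter (fun i => β i ≠ c) with hF
  set P : Polynomial K :=
    X * (∏ j : Fin t, (X - C (α j))) * (∏ i ∈ F, (X - C (β i))) with hP
  set d : ℕ := P.natDegree with hd
  -- evaluation identity
  have hevalx : ∀ (N : ℕ) (x : K),
      ∑ ℓ ∈ range (d + 1), P.coeff ℓ * x ^ (N + ℓ) = x ^ N * P.eval x := by
    intro N x
    rw [Polynomial.eval_eq_sum_range, Finset.mul_sum]
    refine Finset.sum_congr rfl fun ℓ _ => by rw [pow_add]; ring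
  -- eval at α j is zero
  have hevalα : ∀ j, P.eval (α j) = 0 := by
    intro j
    rw [hP]
    simp only [Polynomial.eval_mul, Polynomial.eval_prod, Polynomial.eval_sub,
      Polynomial.eval_X, Polynomial.eval_C]
    have : (∏ j' : Fin t, (α j - α j')) = 0 :=
      Finset.prod_eq_zero (Finset.mem_univ j) (by ring)
    rw [this]; ring
  -- eval at β i with i ∈ F is zero
  have hevalβF : ∀ i ∈ F, P.eval (β i) = 0 := by
    intro i hi
    rw [hP]
    simp only [Polynomial.eval_mul, Polynomial.eval_prod, Polynomial.eval_sub,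
      Polynomial.eval_X, Polynomial.eval_C]
    have : (∏ i' ∈ F, (β i - β i')) = 0 :=
      Finset.prod_eq_zero hi (by ring)
    rw [this]; ring
  -- eval at c is nonzero
  have hPc : P.eval c ≠ 0 := by
    rw [hP]
    simp only [Polynomial.eval_mul, Polynomial.eval_prod, Polynomial.eval_sub,
      Polynomial.eval_X, Polynomial.eval_C]
    refine mul_ne_zero (mul_ne_zero (hβ i₀) ?_) ?_
    · exact Finset.prod_ne_zero_iff.2 fun j _ => sub_ne_zero.2 (Ne.symm (hαβ i₀ j))
    · exact Finset.prod_ne_zero_iff.2 fun i hi =>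
        sub_ne_zero.2 (Ne.symm (by simpa [hF] using hi))
  set n : ℕ := (Finset.univ.filter (fun i => β i = c)).card with hn
  have hn1 : 1 ≤ n := Finset.card_pos.2 ⟨i₀, by simp [hn, hc]⟩
  have hnK : (n : K) ≠ 0 := Nat.cast_ne_zero.2 (by omega)
  -- the key identity
  have hT : ∀ N : ℕ,
      ∑ ℓ ∈ range (d + 1), P.coeff ℓ * (∑ i, β i ^ (N + ℓ) - ∑ j, α j ^ (N + ℓ))
        = (n : K) * c ^ N * P.eval c := by
    intro N
    have h1 : ∑ ℓ ∈ range (d + 1), P.coeff ℓ * (∑ i, β i ^ (N + ℓ) - ∑ j, α j ^ (N + ℓ))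
        = (∑ i, β i ^ N * P.eval (β i)) - (∑ j, α j ^ N * P.eval (α j)) := by
      simp only [mul_sub, Finset.sum_sub_distrib, Finset.mul_sum]
      congr 1
      · rw [Finset.sum_comm]
        exact Finset.sum_congr rfl fun i _ => hevalx N (β i)
      · rw [Finset.sum_comm]
        exact Finset.sum_congr rfl fun j _ => hevalx N (α j)
    rw [h1]
    have h2 : (∑ j, α j ^ N * P.eval (α j)) = 0 := by
      simp [hevalα]
    have h3 : (∑ i, β i ^ N * P.eval (β i)) = (n : K) * c ^ N * P.eval c := by
      rw [← Finset.sum_filter_add_sum_filter_not Finset.univ (fun i => β i = c)]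
      have : ∑ i ∈ Finset.univ.filter (fun i => ¬ β i = c), β i ^ N * P.eval (β i) = 0 := by
        refine Finset.sum_eq_zero fun i hi => ?_
        rw [hevalβF i (by simpa [hF] using hi)]; ring
      have he : ∑ i ∈ Finset.univ.filter (fun i => β i = c), β i ^ N * P.eval (β i)
          = (n : K) * c ^ N * P.eval c := by
        rw [Finset.sum_congr rfl fun i hi => by
          rw [show β i = c from by simpa using hi]]
        rw [Finset.sum_const, hn, nsmul_eq_mul]
        ring
      rw [this, add_zero, he]
    rw [h2, h3, sub_zero]
  -- the bound
  set Cb : ℝ := ∑ ℓ ∈ range (d + 1), v (P.coeff ℓ) * r ^ ℓ with hCb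
  have hCb0 : 0 ≤ Cb := Finset.sum_nonneg fun ℓ _ =>
    mul_nonneg (v.nonneg _) (pow_nonneg hr.le _)
  have hub : ∀ N : ℕ, 1 ≤ N → v ((n : K) * c ^ N * P.eval c) ≤ Cb * r ^ N := by
    intro N hN
    rw [← hT N]
    refine sum_le_of_na v hna _ _ (mul_nonneg hCb0 (pow_nonneg hr.le _)) ?_
    intro ℓ hℓ
    rw [v.map_mul]
    calc v (P.coeff ℓ) * v (∑ i, β i ^ (N + ℓ) - ∑ j, α j ^ (N + ℓ))
        ≤ v (P.coeff ℓ) * r ^ (N + ℓ) := by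
          exact mul_le_mul_of_nonneg_left (hbound (N + ℓ) (by omega)) (v.nonneg _)
      _ = (v (P.coeff ℓ) * r ^ ℓ) * r ^ N := by rw [pow_add]; ring
      _ ≤ Cb * r ^ N := by
          refine mul_le_mul_of_nonneg_right ?_ (pow_nonneg hr.le _)
          exact Finset.single_le_sum (f := fun ℓ => v (P.coeff ℓ) * r ^ ℓ)
            (fun i _ => mul_nonneg (v.nonneg _) (pow_nonneg hr.le _)) hℓ
  -- contradiction
  have hMr : 1 < M / r := (one_lt_div hr).2 hM
  obtain ⟨N, hN⟩ := pow_unbounded_of_one_lt (Cb / (v ((n : K)) * v (P.eval c))) hMr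
  have hvn : 0 < v ((n : K)) := v.pos hnK
  have hvPc : 0 < v (P.eval c) := v.pos hPc
  have h1 := hub (N + 1) (by omega)
  rw [v.map_mul, v.map_mul, v.map_pow] at h1
  have hlt : Cb * r ^ (N + 1) < v ((n : K)) * v c ^ (N + 1) * v (P.eval c) := by
    have h2 : Cb / (v ((n : K)) * v (P.eval c)) < (M / r) ^ (N + 1) :=
      hN.trans_le (pow_le_pow_right₀ hMr.le (by omega))
    rw [div_lt_iff₀ (by positivity), div_pow, div_mul_eq_mul_div, lt_div_iff₀ (by positivity)] at h2
    calc Cb * r ^ (N + 1) < M ^ (N + 1) * (v ((n : K)) * v (P.eval c)) := h2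
      _ = v ((n : K)) * v c ^ (N + 1) * v (P.eval c) := by rw [hMdef]; ring
  exact absurd h1 (not_le.2 hlt)
end Aux

/-- Let `K` be a field of characteristic zero with a nonarchimedean multiplicative
absolute value `‖·‖`. If `α₁,…,α_t, β₁,…,β_s ∈ K` are nonzero with `α_j ≠ β_i` for all
`i, j`, `r > 0`, and `‖∑ βᵢ^ℓ − ∑ αⱼ^ℓ‖ ≤ r^ℓ` for all `ℓ ≥ 1`, then all `‖αⱼ‖ ≤ r`
and all `‖βᵢ‖ ≤ r`. -/
theorem stmt17 (K : Type*) [Field K] [CharZero K] (v : AbsoluteValue K ℝ)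
    (hna : ∀ x y : K, v (x + y) ≤ max (v x) (v y))
    (s t : ℕ) (α : Fin t → K) (β : Fin s → K)
    (hα : ∀ j, α j ≠ 0) (hβ : ∀ i, β i ≠ 0)
    (hαβ : ∀ i j, α j ≠ β i)
    (r : ℝ) (hr : 0 < r)
    (hbound : ∀ ℓ : ℕ, 1 ≤ ℓ → v (∑ i, β i ^ ℓ - ∑ j, α j ^ ℓ) ≤ r ^ ℓ) :
    (∀ j, v (α j) ≤ r) ∧ (∀ i, v (β i) ≤ r) := by
  constructor
  · intro j
    refine aux_key v hna t s β α hα (fun i j => (hαβ j i).symm) r hr ?_ j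
    intro ℓ hℓ
    have := hbound ℓ hℓ
    rwa [show (∑ j : Fin t, α j ^ ℓ - ∑ i : Fin s, β i ^ ℓ)
      = -(∑ i : Fin s, β i ^ ℓ - ∑ j : Fin t, α j ^ ℓ) by ring, v.map_neg]
  · intro i
    exact aux_key v hna s t α β hβ hαβ r hr hbound i
end
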